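/- arXiv:1212.4800 — 5 statements merged into one kernel-verified Lean document; each statement's English description precedes it below -/
import Mathlib

section
/- Let k ≥ 3, s ≥ 2k, and let η > 0. Then there exists a constant c = c(k, s, η) > 0 such that for all A ≥ 1, the number of coefficient vectors a with 0 < |a_j| ≤ A for all j for which the equation a_1x_1^k + ⋯ + a_sx_s^k = 0 admits an integral solution x ∈ ℤ^s with 0 < max_j |x_j| ≤ c·|a|^(1/(s−k)) does not exceed η·A^s. -/
open MeasureTheory

/-- `e(α) = exp(2πiα)`. -/
noncomputable def eC (α : ℝ) : ℂ := Complex.exp (2 * Real.pi * Complex.I * α)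

/-- `v(β, B) = ∫_{-B}^{B} e(β ξ^k) dξ`. -/
noncomputable def vInt (k : ℕ) (β B : ℝ) : ℂ := ∫ ξ in (-B)..B, eC (β * ξ ^ k)

/-- The singular integral `J_a = ∫_{-∞}^{∞} v(a_1 β,1) ⋯ v(a_s β,1) dβ` (a real number). -/
noncomputable def Ja (k s : ℕ) (a : Fin s → ℤ) : ℝ :=
  (∫ β : ℝ, ∏ j, vInt k ((a j : ℝ) * β) 1).re

/-- The Gauss sum `S(q, m) = ∑_{x=1}^{q} e(m x^k / q)`. -/
noncomputable def Sq (k q : ℕ) (m : ℤ) : ℂ :=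
  ∑ x ∈ Finset.Icc 1 q, eC ((m : ℝ) * (x : ℝ) ^ k / q)

/-- `T_a(q) = q^{-s} ∑_{r=1, (r,q)=1}^{q} S(q, a_1 r) ⋯ S(q, a_s r)`. -/
noncomputable def Tq (k s : ℕ) (a : Fin s → ℤ) (q : ℕ) : ℂ :=
  ((q : ℂ) ^ s)⁻¹ * ∑ r ∈ (Finset.Icc 1 q).filter (fun r => Nat.gcd r q = 1),
    ∏ j, Sq k q (a j * r)

/-- The singular series `𝔖_a = ∑_{q=1}^∞ T_a(q)` (a real number; the `q = 0` term vanishes). -/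
noncomputable def SS (k s : ℕ) (a : Fin s → ℤ) : ℝ := (∑' q : ℕ, Tq k s a q).re

/-- `ρ_a(B)`: the number of `x ∈ ℤ^s` with `1 ≤ |x_j| ≤ B` and `a_1 x_1^k + ⋯ + a_s x_s^k = 0`. -/
noncomputable def rho (k s : ℕ) (a : Fin s → ℤ) (B : ℝ) : ℕ :=
  Set.ncard {x : Fin s → ℤ | (∀ j, x j ≠ 0 ∧ (|x j| : ℝ) ≤ B) ∧ ∑ j, a j * x j ^ k = 0}

/-- `|a| = max_j |a_j|`. -/
noncomputable def maxnorm (s : ℕ) (a : Fin s → ℤ) : ℝ :=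
  ((Finset.univ.sup fun j => (a j).natAbs : ℕ) : ℝ)

open Finset

variable {s k : ℕ}


lemma bezout_of_prim {s : ℕ} (y : Fin s → ℤ)
    (prim : ∀ z : ℤ, (∀ j, z ∣ y j) → IsUnit z) (k : ℕ) :
    ∃ c : Fin s → ℤ, ∑ j, c j * (y j) ^ k = 1 := by
  have hspan : Ideal.span (Set.range fun j => (y j) ^ k) = ⊤ := by
    obtain ⟨g, hg⟩ := (Ideal.span (Set.range fun j => (y j) ^ k)).isPrincipal_iff.mp
      inferInstance
    rw [hg, Ideal.submodule_span_eq, Ideal.span_singleton_eq_top]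
    by_contra hgu
    have hdvd : ∀ j, g ∣ (y j) ^ k := fun j => by
      rw [← Ideal.mem_span_singleton, ← Ideal.submodule_span_eq, ← hg]
      exact Ideal.subset_span ⟨j, rfl⟩
    rcases Int.exists_prime_and_dvd (n := g) (by
      intro h1
      exact hgu (Int.isUnit_iff.mpr (by rcases Int.natAbs_eq g with h | h <;> omega))) with
      ⟨p, hp, hpg⟩
    have : ∀ j, p ∣ y j := fun j => hp.dvd_of_dvd_pow (hpg.trans (hdvd j))
    exact hp.not_unit (prim p this)
  have h1 : (1 : ℤ) ∈ Ideal.span (Set.range fun j => (y j) ^ k) := by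
    rw [hspan]; exact Submodule.mem_top
  rw [Ideal.span, Submodule.mem_span_range_iff_exists_fun] at h1
  obtain ⟨c, hc⟩ := h1
  exact ⟨c, by simpa [smul_eq_mul] using hc⟩

lemma card_ker_mul {ι : Type*} [Fintype ι] [DecidableEq ι] (m : ℕ) [NeZero m]
    (w : ι → ZMod m) (c : ι → ZMod m) (hc : ∑ i, c i * w i = 1) :
    (Finset.univ.filter fun r : ι → ZMod m => ∑ i, r i * w i = 0).card * m
      = m ^ Fintype.card ι := by
  classical
  set Lf : (ι → ZMod m) → ZMod m := fun r => ∑ i, r i * w i with hLf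
  have hLsub : ∀ a b, Lf (a - b) = Lf a - Lf b := by
    intro a b; simp [hLf, Finset.sum_sub_distrib, sub_mul]
  have hLadd : ∀ a b, Lf (a + b) = Lf a + Lf b := by
    intro a b; simp [hLf, Finset.sum_add_distrib, add_mul]
  have hLsmul : ∀ (u : ZMod m), Lf (fun i => u * c i) = u := by
    intro u
    simp only [hLf, mul_assoc, ← Finset.mul_sum, hc, mul_one]
  have e : (ι → ZMod m) ≃ {r : ι → ZMod m // Lf r = 0} × ZMod m :=
    { toFun := fun a => (⟨a - fun i => Lf a * c i, by
        have := hLsub a (fun i => Lf a * c i)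
        rw [hLsmul (Lf a)] at this
        rw [this, sub_self]⟩, Lf a)
      invFun := fun p => p.1.1 + fun i => p.2 * c i
      left_inv := by
        intro a
        funext i
        simp
      right_inv := by
        rintro ⟨⟨r, hr⟩, u⟩
        have hL : Lf (r + fun i => u * c i) = u := by
          rw [hLadd, hr, hLsmul, zero_add]
        refine Prod.ext ?_ ?_
        · apply Subtype.ext
          simp only [hL]
          funext i
          simp
        · simpa using hL }
  have hcard := Fintype.card_congr e
  rw [Fintype.card_prod, Fintype.card_fun, ZMod.card] at hcard
  have h2 : (Finset.univ.filter fun r : ι → ZMod m => ∑ i, r i * w i = 0).card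
      = Fintype.card {r : ι → ZMod m // Lf r = 0} := by
    rw [Fintype.card_subtype]
  have h3 : Fintype.card (ι → ZMod m) = m ^ Fintype.card ι := by
    rw [Fintype.card_fun, ZMod.card]
  rw [h2, ← h3]
  rw [h3]
  exact hcard.symm




/-- The box `[-N,N]^s` as a finset. -/
noncomputable def ibox (s : ℕ) (N : ℕ) : Finset (Fin s → ℤ) :=
  Fintype.piFinset fun _ => Finset.Icc (-(N : ℤ)) N

lemma mem_ibox {N : ℕ} {a : Fin s → ℤ} : a ∈ ibox s N ↔ ∀ j, (a j).natAbs ≤ N := by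
  unfold ibox
  rw [Fintype.mem_piFinset]
  constructor <;> intro h j <;> have := h j <;> rw [Finset.mem_Icc] at * <;> omega



/-- Core counting lemma. -/
lemma core_count (hs : 0 < s) (y : Fin s → ℤ)
    (prim : ∀ z : ℤ, (∀ j, z ∣ y j) → IsUnit z) (N : ℕ) :
    ((ibox s N).filter fun a => ∑ j, a j * (y j) ^ k = 0).card
        * (Finset.univ.sup fun j => (y j).natAbs) ^ k
      ≤ (2 * N + (Finset.univ.sup fun j => (y j).natAbs) ^ k) ^ (s - 1) := by
  classical
  set Y : ℕ := Finset.univ.sup fun j => (y j).natAbs with hY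
  obtain ⟨j0, -, hj0⟩ := Finset.exists_mem_eq_sup (Finset.univ : Finset (Fin s))
    (Finset.univ_nonempty_iff.mpr ⟨⟨0, hs⟩⟩) (fun j => (y j).natAbs)
  have hj0' : Y = (y j0).natAbs := hj0
  have hy_ne : ∃ j, y j ≠ 0 := by
    by_contra h
    push_neg at h
    have := prim 2 (fun j => by rw [h j]; exact dvd_zero 2)
    rw [Int.isUnit_iff] at this
    omega
  have hYpos : 0 < Y := by
    obtain ⟨j, hj⟩ := hy_ne
    calc 0 < (y j).natAbs := by omega
    _ ≤ Y := Finset.le_sup (f := fun j => (y j).natAbs) (Finset.mem_univ j)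
  set m : ℕ := Y ^ k with hm
  have hmpos : 0 < m := Nat.pow_pos hYpos
  haveI : NeZero m := ⟨by omega⟩
  set K : ℕ := 2 * N / m + 1 with hK
  have hcardι : Fintype.card {j : Fin s // j ≠ j0} = s - 1 := by
    simp only [ne_eq]
    rw [Fintype.card_subtype_compl, Fintype.card_subtype_eq, Fintype.card_fin]
  have hdvd_j0 : (m : ℤ) ∣ (y j0) ^ k := by
    have h1 : m = ((y j0) ^ k).natAbs := by rw [Int.natAbs_pow, hm, hj0']
    rw [h1]
    exact Int.natAbs_dvd.mpr dvd_rfl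
  have hw0 : ((y j0 : ZMod m)) ^ k = 0 := by
    have := (ZMod.intCast_zmod_eq_zero_iff_dvd ((y j0) ^ k) m).mpr hdvd_j0
    push_cast at this
    exact this
  set w : {j : Fin s // j ≠ j0} → ZMod m := fun i => ((y i.1 : ZMod m)) ^ k with hw
  obtain ⟨c, hc⟩ := bezout_of_prim y prim k
  have hsig : ∀ g : Fin s → ZMod m,
      ∑ i : {j : Fin s // j ≠ j0}, g i.1 = ∑ j ∈ Finset.univ.erase j0, g j := by
    intro g
    rw [Finset.sum_subtype (p := fun j => j ≠ j0) (Finset.univ.erase j0)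
      (fun x => by simp [Finset.mem_erase]) g]
  -- the Bezout relation descends to `ZMod m` over the subtype
  have hc' : ∑ i : {j : Fin s // j ≠ j0}, ((c i.1 : ZMod m)) * w i = 1 := by
    have hcast : ((∑ j, c j * (y j) ^ k : ℤ) : ZMod m) = 1 := by rw [hc]; simp
    push_cast at hcast
    set g : Fin s → ZMod m := fun j => ((c j : ZMod m)) * ((y j : ZMod m)) ^ k with hg
    have h2 : g j0 + ∑ j ∈ Finset.univ.erase j0, g j = ∑ j, g j :=
      Finset.add_sum_erase _ g (Finset.mem_univ j0)
    have hgj0 : g j0 = 0 := by rw [hg]; simp only [hw0, mul_zero]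
    rw [hgj0, zero_add, hcast] at h2
    rw [hsig g]
    exact h2
  -- counting the residue classes
  have hker := card_ker_mul m w (fun i => (c i.1 : ZMod m)) hc'
  rw [hcardι] at hker
  -- the injection
  set T2 : Finset ({j : Fin s // j ≠ j0} → ZMod m) :=
    Finset.univ.filter (fun r => ∑ i, r i * w i = 0) with hT2
  have hKpos : 0 < K := Nat.succ_pos _
  set Φ : (Fin s → ℤ) → ({j : Fin s // j ≠ j0} → Fin K) × ({j : Fin s // j ≠ j0} → ZMod m) :=
    fun a => (fun i => ⟨min ((a i.1 + N).toNat / m) (K - 1), Nat.lt_of_le_of_lt (min_le_right _ _) (Nat.sub_lt hKpos Nat.one_pos)⟩,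
              fun i => ((a i.1 : ZMod m))) with hΦ
  have hq : ∀ a ∈ ibox s N, ∀ i : {j : Fin s // j ≠ j0},
      (a i.1 + N).toNat / m ≤ K - 1 := by
    intro a ha i
    have h1 := (mem_ibox.mp ha) i.1
    have h2 : (a i.1 + N).toNat ≤ 2 * N := by omega
    have h3 : (a i.1 + N).toNat / m ≤ 2 * N / m := Nat.div_le_div_right h2
    omega
  have hmaps : ∀ a ∈ (ibox s N).filter fun a => ∑ j, a j * (y j) ^ k = 0,
      Φ a ∈ (Finset.univ : Finset ({j : Fin s // j ≠ j0} → Fin K)) ×ˢ T2 := by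
    intro a ha
    rw [Finset.mem_product]
    refine ⟨Finset.mem_univ _, ?_⟩
    rw [hT2, Finset.mem_filter]
    refine ⟨Finset.mem_univ _, ?_⟩
    obtain ⟨-, heq⟩ := Finset.mem_filter.mp ha
    have hcast : ((∑ j, a j * (y j) ^ k : ℤ) : ZMod m) = 0 := by rw [heq]; simp
    push_cast at hcast
    set g : Fin s → ZMod m := fun j => ((a j : ZMod m)) * ((y j : ZMod m)) ^ k with hg
    have h2 : g j0 + ∑ j ∈ Finset.univ.erase j0, g j = ∑ j, g j :=
      Finset.add_sum_erase _ g (Finset.mem_univ j0)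
    have hgj0 : g j0 = 0 := by rw [hg]; simp only [hw0, mul_zero]
    rw [hgj0, zero_add, hcast] at h2
    show ∑ i : {j : Fin s // j ≠ j0}, ((a i.1 : ZMod m)) * w i = 0
    rw [hsig g]
    exact h2
  have hinj : Set.InjOn Φ ((ibox s N).filter fun a => ∑ j, a j * (y j) ^ k = 0) := by
    intro a ha b hb hab
    obtain ⟨haB, haE⟩ := Finset.mem_filter.mp ha
    obtain ⟨hbB, hbE⟩ := Finset.mem_filter.mp hb
    have hcomp : ∀ i : {j : Fin s // j ≠ j0}, a i.1 = b i.1 := by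
      intro i
      have h1 : (Φ a).1 i = (Φ b).1 i := by rw [hab]
      have h2 : (Φ a).2 i = (Φ b).2 i := by rw [hab]
      simp only [hΦ, Fin.mk.injEq] at h1
      rw [min_eq_left (hq a haB i), min_eq_left (hq b hbB i)] at h1
      -- residues agree
      have hres : (m : ℤ) ∣ (a i.1 - b i.1) := by
        have h4 : ((a i.1 : ZMod m)) = ((b i.1 : ZMod m)) := h2
        rw [ZMod.intCast_eq_intCast_iff] at h4
        exact Int.ModEq.dvd h4.symm
      set u : ℕ := (a i.1 + N).toNat with hu
      set v : ℕ := (b i.1 + N).toNat with hv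
      have hau : (u : ℤ) = a i.1 + N := by
        have := (mem_ibox.mp haB) i.1; omega
      have hbv : (v : ℤ) = b i.1 + N := by
        have := (mem_ibox.mp hbB) i.1; omega
      have hdvduv : (m : ℤ) ∣ ((u : ℤ) - (v : ℤ)) := by
        have h6 : (u : ℤ) - v = a i.1 - b i.1 := by rw [hau, hbv]; ring
        rw [h6]
        exact hres
      have hmod : u % m = v % m := by
        have h4 : (m : ℤ) ∣ (v : ℤ) - u := by
          have h5 := dvd_neg.mpr hdvduv
          rwa [neg_sub] at h5
        have h3 : ((u : ℤ)) % m = ((v : ℤ)) % m := Int.modEq_iff_dvd.mpr h4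
        have h7 : ((u % m : ℕ) : ℤ) = ((v % m : ℕ) : ℤ) := by push_cast; exact h3
        exact_mod_cast h7
      have huv : u = v := by
        rw [← Nat.div_add_mod u m, ← Nat.div_add_mod v m, h1, hmod]
      omega
    -- now recover the `j0` coordinate
    have hj0eq : a j0 = b j0 := by
      have hy0 : (y j0) ^ k ≠ 0 := by
        apply pow_ne_zero
        intro h
        rw [h] at hj0'
        simp only [Int.natAbs_zero] at hj0'
        omega
      have hsa : a j0 * (y j0) ^ k + ∑ j ∈ Finset.univ.erase j0,
          a j * (y j) ^ k = 0 := by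
        rw [Finset.add_sum_erase _ (fun j => a j * (y j) ^ k) (Finset.mem_univ j0)]
        exact haE
      have hsb : b j0 * (y j0) ^ k + ∑ j ∈ Finset.univ.erase j0,
          b j * (y j) ^ k = 0 := by
        rw [Finset.add_sum_erase _ (fun j => b j * (y j) ^ k) (Finset.mem_univ j0)]
        exact hbE
      have hsum_eq : ∑ j ∈ Finset.univ.erase j0, a j * (y j) ^ k
          = ∑ j ∈ Finset.univ.erase j0, b j * (y j) ^ k := by
        apply Finset.sum_congr rfl
        intro j hj
        rw [hcomp ⟨j, (Finset.mem_erase.mp hj).1⟩]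
      rw [hsum_eq] at hsa
      have := sub_eq_zero.mpr (hsa.trans hsb.symm)
      have h5 : (a j0 - b j0) * (y j0) ^ k = 0 := by ring_nf; ring_nf at this; linarith
      rcases mul_eq_zero.mp h5 with h | h
      · linarith [sub_eq_zero.mp h]
      · exact absurd h hy0
    funext j
    by_cases hj : j = j0
    · rw [hj]; exact hj0eq
    · exact hcomp ⟨j, hj⟩
  -- put it together
  have hle := Finset.card_le_card_of_injOn Φ hmaps hinj
  have hTcard : ((Finset.univ : Finset ({j : Fin s // j ≠ j0} → Fin K))).card
      = K ^ (s - 1) := by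
    rw [Finset.card_univ, Fintype.card_fun, Fintype.card_fin, hcardι]
  rw [Finset.card_product, hTcard] at hle
  calc ((ibox s N).filter fun a => ∑ j, a j * (y j) ^ k = 0).card * m
      ≤ K ^ (s - 1) * T2.card * m := by
        exact Nat.mul_le_mul_right m hle
    _ = K ^ (s - 1) * (T2.card * m) := by ring
    _ = K ^ (s - 1) * m ^ (s - 1) := by rw [hT2, hker]
    _ = (K * m) ^ (s - 1) := (mul_pow K m (s - 1)).symm
    _ ≤ (2 * N + m) ^ (s - 1) := by
        apply Nat.pow_le_pow_left
        have h8 := Nat.div_mul_le_self (2 * N) m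
        have h9 : K * m = 2 * N / m * m + m := by rw [hK]; ring
        rw [h9]
        exact Nat.add_le_add_right h8 m




lemma card_Icc_int (n : ℕ) : (Finset.Icc (-(n : ℤ)) n).card = 2 * n + 1 := by
  rw [Int.card_Icc]
  omega

lemma card_Icc_erase_int (n : ℕ) : ((Finset.Icc (-(n : ℤ)) n).erase 0).card = 2 * n := by
  rw [Finset.card_erase_of_mem (by rw [Finset.mem_Icc]; omega), card_Icc_int]
  omega

/-- gcd of the coordinates. -/
def gv {s : ℕ} (x : Fin s → ℤ) : ℕ := Finset.univ.gcd fun j => (x j).natAbs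

/-- primitive part. -/
def yv {s : ℕ} (x : Fin s → ℤ) : Fin s → ℤ := fun j => x j / (gv x)

lemma gcd_decomp {s : ℕ} (x : Fin s → ℤ) (hx : x ≠ 0) :
    0 < gv x ∧ (∀ j, x j = gv x * yv x j) ∧
      (∀ z : ℤ, (∀ j, z ∣ yv x j) → IsUnit z) ∧
      (∀ j, (x j).natAbs = gv x * (yv x j).natAbs) := by
  classical
  have hgdvd : ∀ j, ((gv x : ℤ)) ∣ x j := by
    intro j
    have h1 : gv x ∣ (x j).natAbs := Finset.gcd_dvd (Finset.mem_univ j)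
    exact Int.dvd_natAbs.mp (Int.natCast_dvd_natCast.mpr h1)
  have hg0 : 0 < gv x := by
    rcases Nat.eq_zero_or_pos (gv x) with h | h
    · exfalso
      apply hx
      funext j
      have := Finset.gcd_eq_zero_iff.mp h j (Finset.mem_univ j)
      simp only [Pi.zero_apply]
      omega
    · exact h
  have heq : ∀ j, x j = gv x * yv x j := by
    intro j
    rw [yv, Int.mul_ediv_cancel' (hgdvd j)]
  have habs : ∀ j, (x j).natAbs = gv x * (yv x j).natAbs := by
    intro j
    conv_lhs => rw [heq j]
    rw [Int.natAbs_mul, Int.natAbs_natCast]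
  refine ⟨hg0, heq, ?_, habs⟩
  intro z hz
  have hd : ∀ j, z.natAbs * gv x ∣ (x j).natAbs := by
    intro j
    rw [habs j, mul_comm]
    exact Nat.mul_dvd_mul_left (gv x) (Int.natAbs_dvd_natAbs.mpr (hz j))
  have h2 : z.natAbs * gv x ∣ gv x := Finset.dvd_gcd (fun j _ => hd j)
  have h4 : z.natAbs * gv x ≤ 1 * gv x := by
    rw [one_mul]
    exact Nat.le_of_dvd hg0 h2
  have h5 : z.natAbs ≤ 1 := Nat.le_of_mul_le_mul_right h4 hg0
  have h6 : z ≠ 0 := by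
    intro hz0
    apply hx
    funext j
    have : yv x j = 0 := by
      have := hz j
      rw [hz0] at this
      exact zero_dvd_iff.mp this
    rw [Pi.zero_apply, heq j, this, mul_zero]
  rw [Int.isUnit_iff]
  omega

lemma sup_mul_eq {s : ℕ} (hs : 0 < s) (x : Fin s → ℤ) (hx : x ≠ 0) :
    (Finset.univ.sup fun j => (x j).natAbs)
      = gv x * (Finset.univ.sup fun j => (yv x j).natAbs) := by
  obtain ⟨hg0, -, -, habs⟩ := gcd_decomp x hx
  apply le_antisymm
  · apply Finset.sup_le
    intro j _
    rw [habs j]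
    exact Nat.mul_le_mul_left _ (Finset.le_sup (f := fun j => (yv x j).natAbs)
      (Finset.mem_univ j))
  · obtain ⟨j1, -, hj1⟩ := Finset.exists_mem_eq_sup (Finset.univ : Finset (Fin s))
      (Finset.univ_nonempty_iff.mpr ⟨⟨0, hs⟩⟩) (fun j => (yv x j).natAbs)
    rw [hj1, ← habs j1]
    exact Finset.le_sup (f := fun j => (x j).natAbs) (Finset.mem_univ j1)

/-- The inner sum estimate. -/
lemma innerSumBound (hs : 0 < s) (hk : 0 < k) (hks : k < s) (M : ℕ) :
    ∑ y ∈ ((ibox s M).erase 0),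
        (((Finset.univ.sup fun j => (y j).natAbs : ℕ) : ℝ))⁻¹ ^ k
      ≤ (s : ℝ) * (2 * 3 ^ (s - 1)) * (M : ℝ) ^ (s - k) := by
  classical
  have e1 : s - 1 - k = s - k - 1 := by omega
  have e2 : s - k = (s - k - 1) + 1 := by omega
  set f : (Fin s → ℤ) → ℝ :=
    fun y => (((Finset.univ.sup fun j => (y j).natAbs : ℕ) : ℝ))⁻¹ ^ k with hf
  have hfnonneg : ∀ y, 0 ≤ f y := fun y => by positivity
  set B : Fin s → Finset (Fin s → ℤ) := fun j =>
    ((ibox s M).erase 0).filter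
      (fun y => y j ≠ 0 ∧ ∀ i, (y i).natAbs ≤ (y j).natAbs) with hB
  -- step 1: pointwise bound
  have hpt : ∀ y ∈ (ibox s M).erase 0,
      f y ≤ ∑ j, (if y ∈ B j then f y else 0) := by
    intro y hy
    obtain ⟨hy0, hybox⟩ := Finset.mem_erase.mp hy
    obtain ⟨j, -, hj⟩ := Finset.exists_mem_eq_sup (Finset.univ : Finset (Fin s))
      (Finset.univ_nonempty_iff.mpr ⟨⟨0, hs⟩⟩) (fun i => (y i).natAbs)
    have hyj : y j ≠ 0 := by
      intro h
      apply hy0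
      funext i
      have h1 : (y i).natAbs ≤ (y j).natAbs :=
        hj ▸ Finset.le_sup (f := fun i => (y i).natAbs) (Finset.mem_univ i)
      rw [h] at h1
      simp only [Int.natAbs_zero, Nat.le_zero] at h1
      simp only [Pi.zero_apply]
      omega
    have hmem : y ∈ B j := by
      rw [hB, Finset.mem_filter]
      exact ⟨hy, hyj, fun i =>
        hj ▸ Finset.le_sup (f := fun i => (y i).natAbs) (Finset.mem_univ i)⟩
    calc f y = (if y ∈ B j then f y else 0) := by rw [if_pos hmem]
      _ ≤ ∑ j', (if y ∈ B j' then f y else 0) :=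
        Finset.single_le_sum (f := fun j' => if y ∈ B j' then f y else 0)
          (fun i _ => by positivity) (Finset.mem_univ j)
  -- step 2
  have hstep2 : ∑ y ∈ (ibox s M).erase 0, f y
      ≤ ∑ j, ∑ y ∈ B j, f y := by
    calc ∑ y ∈ (ibox s M).erase 0, f y
        ≤ ∑ y ∈ (ibox s M).erase 0, ∑ j, (if y ∈ B j then f y else 0) :=
          Finset.sum_le_sum hpt
      _ = ∑ j, ∑ y ∈ (ibox s M).erase 0, (if y ∈ B j then f y else 0) :=
          Finset.sum_comm
      _ = ∑ j, ∑ y ∈ B j, f y := by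
          apply Finset.sum_congr rfl
          intro j _
          rw [← Finset.sum_filter]
          congr 1
          rw [Finset.filter_mem_eq_inter, Finset.inter_eq_right]
          rw [hB]
          exact Finset.filter_subset _ _
  -- step 3: per-j bound
  have hcardsub : ∀ j : Fin s, Fintype.card {i : Fin s // i ≠ j} = s - 1 := by
    intro j
    simp only [ne_eq]
    rw [Fintype.card_subtype_compl, Fintype.card_subtype_eq, Fintype.card_fin]
  have hstep3 : ∀ j, ∑ y ∈ B j, f y ≤ (2 * 3 ^ (s - 1)) * (M : ℝ) ^ (s - k) := by
    intro j
    set V : Finset ℤ := (Finset.Icc (-(M : ℤ)) M).erase 0 with hV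
    have hmapsV : ∀ y ∈ B j, y j ∈ V := by
      intro y hy
      rw [hB, Finset.mem_filter] at hy
      obtain ⟨hyE, hyj0, -⟩ := hy
      obtain ⟨-, hybox⟩ := Finset.mem_erase.mp hyE
      rw [hV, Finset.mem_erase, Finset.mem_Icc]
      have := mem_ibox.mp hybox j
      exact ⟨hyj0, by omega, by omega⟩
    rw [← Finset.sum_fiberwise_of_maps_to hmapsV f]
    have hfiber : ∀ v ∈ V, ∑ y ∈ (B j).filter (fun y => y j = v), f y
        ≤ (3 : ℝ) ^ (s - 1) * (M : ℝ) ^ (s - k - 1) := by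
      intro v hv
      obtain ⟨hv0, hvIcc⟩ := Finset.mem_erase.mp hv
      rw [Finset.mem_Icc] at hvIcc
      have hvabs : 1 ≤ v.natAbs := by omega
      have hvM : v.natAbs ≤ M := by omega
      have hterm : ∀ y ∈ (B j).filter (fun y => y j = v),
          f y = ((v.natAbs : ℝ))⁻¹ ^ k := by
        intro y hy
        obtain ⟨hyB, hyjv⟩ := Finset.mem_filter.mp hy
        rw [hB, Finset.mem_filter] at hyB
        obtain ⟨-, -, hmax⟩ := hyB
        have hsup : (Finset.univ.sup fun i => (y i).natAbs) = v.natAbs := by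
          apply le_antisymm
          · exact Finset.sup_le (fun i _ => hyjv ▸ hmax i)
          · rw [← hyjv]
            exact Finset.le_sup (f := fun i => (y i).natAbs) (Finset.mem_univ j)
        rw [hf]
        simp only
        rw [hsup]
      rw [Finset.sum_congr rfl hterm, Finset.sum_const]
      have hcard0 : ((B j).filter (fun y => y j = v)).card
          ≤ (Fintype.piFinset fun _ : {i : Fin s // i ≠ j} =>
              Finset.Icc (-(v.natAbs : ℤ)) (v.natAbs)).card := by
        apply Finset.card_le_card_of_injOn
          (fun (y : Fin s → ℤ) (i : {i : Fin s // i ≠ j}) => y i.1)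
        · intro y hy
          obtain ⟨hyB, hyjv⟩ := Finset.mem_filter.mp hy
          rw [hB, Finset.mem_filter] at hyB
          obtain ⟨-, -, hmax⟩ := hyB
          rw [Finset.mem_coe, Fintype.mem_piFinset]
          intro i
          rw [Finset.mem_Icc]
          have := hyjv ▸ hmax i.1
          dsimp only
          omega
        · intro y hy y' hy' hcong
          obtain ⟨-, hyjv⟩ := Finset.mem_filter.mp (Finset.mem_coe.mp hy)
          obtain ⟨-, hyjv'⟩ := Finset.mem_filter.mp (Finset.mem_coe.mp hy')
          funext i
          by_cases hij : i = j
          · rw [hij, hyjv, hyjv']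
          · exact congrFun hcong ⟨i, hij⟩
      have hcard : ((B j).filter (fun y => y j = v)).card
          ≤ (2 * v.natAbs + 1) ^ (s - 1) := by
        rw [Fintype.card_piFinset] at hcard0
        calc ((B j).filter (fun y => y j = v)).card
            ≤ ∏ _i : {i : Fin s // i ≠ j}, (Finset.Icc (-(v.natAbs : ℤ)) (v.natAbs)).card :=
              hcard0
          _ = (2 * v.natAbs + 1) ^ (s - 1) := by
              rw [Finset.prod_const, Finset.card_univ, hcardsub j, card_Icc_int]
      have hn1 : (1 : ℝ) ≤ (v.natAbs : ℝ) := by exact_mod_cast hvabs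
      have hnM : ((v.natAbs : ℕ) : ℝ) ≤ (M : ℝ) := by exact_mod_cast hvM
      calc (((B j).filter (fun y => y j = v)).card : ℕ) • (((v.natAbs : ℕ) : ℝ))⁻¹ ^ k
          = (((B j).filter (fun y => y j = v)).card : ℝ) * ((v.natAbs : ℝ))⁻¹ ^ k := by
            rw [nsmul_eq_mul]
        _ ≤ ((2 * v.natAbs + 1 : ℕ) : ℝ) ^ (s - 1) * ((v.natAbs : ℝ))⁻¹ ^ k := by
            apply mul_le_mul_of_nonneg_right _ (by positivity)
            exact_mod_cast hcard
        _ ≤ ((3 : ℝ) * (v.natAbs : ℝ)) ^ (s - 1) * ((v.natAbs : ℝ))⁻¹ ^ k := by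
            apply mul_le_mul_of_nonneg_right _ (by positivity)
            apply pow_le_pow_left₀ (by positivity)
            push_cast
            nlinarith
        _ = (3 : ℝ) ^ (s - 1) * ((v.natAbs : ℝ) ^ (s - 1) * ((v.natAbs : ℝ))⁻¹ ^ k) := by
            rw [mul_pow]; ring
        _ = (3 : ℝ) ^ (s - 1) * (v.natAbs : ℝ) ^ (s - 1 - k) := by
            congr 1
            rw [inv_pow, ← div_eq_mul_inv]
            exact (pow_sub₀ (v.natAbs : ℝ) (by positivity) (Nat.le_sub_one_of_lt hks)).symm
        _ ≤ (3 : ℝ) ^ (s - 1) * (M : ℝ) ^ (s - k - 1) := by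
            apply mul_le_mul_of_nonneg_left _ (by positivity)
            rw [e1]
            exact pow_le_pow_left₀ (by positivity) hnM _
    calc ∑ v ∈ V, ∑ y ∈ (B j).filter (fun y => y j = v), f y
        ≤ ∑ v ∈ V, (3 : ℝ) ^ (s - 1) * (M : ℝ) ^ (s - k - 1) :=
          Finset.sum_le_sum hfiber
      _ = (V.card : ℝ) * ((3 : ℝ) ^ (s - 1) * (M : ℝ) ^ (s - k - 1)) := by
          rw [Finset.sum_const, nsmul_eq_mul]
      _ ≤ (2 * M : ℝ) * ((3 : ℝ) ^ (s - 1) * (M : ℝ) ^ (s - k - 1)) := by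
          apply mul_le_mul_of_nonneg_right _ (by positivity)
          have hVcard : V.card = 2 * M := by rw [hV, card_Icc_erase_int]
          rw [hVcard]
          push_cast
          exact le_refl _
      _ = (2 * 3 ^ (s - 1)) * ((M : ℝ) * (M : ℝ) ^ (s - k - 1)) := by ring
      _ = (2 * 3 ^ (s - 1)) * (M : ℝ) ^ (s - k) := by
          have e3 : (M : ℝ) * (M : ℝ) ^ (s - k - 1) = (M : ℝ) ^ (s - k) := by
            rw [← pow_succ', ← e2]
          rw [← e3]
  calc ∑ y ∈ (ibox s M).erase 0, f y ≤ ∑ j, ∑ y ∈ B j, f y := hstep2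
    _ ≤ ∑ j : Fin s, (2 * 3 ^ (s - 1)) * (M : ℝ) ^ (s - k) :=
        Finset.sum_le_sum (fun j _ => hstep3 j)
    _ = (s : ℝ) * (2 * 3 ^ (s - 1)) * (M : ℝ) ^ (s - k) := by
        rw [Finset.sum_const, Finset.card_univ, Fintype.card_fin]
        push_cast
        ring


lemma sum_inv_sq_aux : ∀ n : ℕ, 1 ≤ n →
    ∑ d ∈ Finset.Icc 1 n, ((d : ℝ))⁻¹ ^ 2 ≤ 2 - 1 / n := by
  intro n
  induction n with
  | zero => omega
  | succ n ih =>
    intro _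
    rcases Nat.eq_zero_or_pos n with h0 | hn1
    · subst h0
      norm_num
    · have hsum := ih hn1
      rw [Finset.sum_Icc_succ_top (by omega : 1 ≤ n + 1)]
      have hnR : (1 : ℝ) ≤ (n : ℝ) := by exact_mod_cast hn1
      have key : (((n : ℝ)) + 1)⁻¹ ^ 2 ≤ 1 / (n : ℝ) - 1 / ((n : ℝ) + 1) := by
        have h2 : 1 / (n : ℝ) - 1 / ((n : ℝ) + 1) = 1 / ((n : ℝ) * ((n : ℝ) + 1)) := by
          field_simp
          ring
        rw [h2, inv_pow, ← one_div]
        apply one_div_le_one_div_of_le (by nlinarith)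
        nlinarith
      push_cast
      push_cast at hsum
      linarith
lemma sum_inv_pow_le (n t : ℕ) (ht : 2 ≤ t) :
    ∑ d ∈ Finset.Icc 1 n, ((d : ℝ))⁻¹ ^ t ≤ 2 := by
  rcases Nat.eq_zero_or_pos n with h0 | hn
  · subst h0; simp
  calc ∑ d ∈ Finset.Icc 1 n, ((d : ℝ))⁻¹ ^ t
      ≤ ∑ d ∈ Finset.Icc 1 n, ((d : ℝ))⁻¹ ^ 2 := by
        apply Finset.sum_le_sum
        intro d hd
        obtain ⟨hd1, -⟩ := Finset.mem_Icc.mp hd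
        have h1 : (1 : ℝ) ≤ (d : ℝ) := by exact_mod_cast hd1
        exact pow_le_pow_of_le_one (by positivity) (inv_le_one_of_one_le₀ h1) ht
    _ ≤ 2 - 1 / n := sum_inv_sq_aux n hn
    _ ≤ 2 := by
        have : (0 : ℝ) < n := by exact_mod_cast hn
        have : 0 < 1 / (n : ℝ) := by positivity
        linarith


/-- **Theorem 1.4.** -/
theorem small_solutions_rare (k s : ℕ) (hk : 3 ≤ k) (hs : 2 * k ≤ s)
    (η : ℝ) (hη : 0 < η) :
    ∃ c : ℝ, 0 < c ∧ ∀ A : ℝ, 1 ≤ A →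
      (Set.ncard {a : Fin s → ℤ | (∀ j, a j ≠ 0 ∧ (|a j| : ℝ) ≤ A) ∧
          ∃ x : Fin s → ℤ, x ≠ 0 ∧
            (∀ j, (|x j| : ℝ) ≤ c * (maxnorm s a) ^ (1 / ((s : ℝ) - (k : ℝ)))) ∧
            ∑ j, a j * x j ^ k = 0} : ℝ)
        ≤ η * A ^ (s : ℝ) := by
  classical
  have hs0 : 0 < s := by omega
  have hk0 : 0 < k := by omega
  have hks : k < s := by omega
  set t : ℕ := s - k with htdef
  have ht2 : 2 ≤ t := by omega
  have htk : k ≤ t := by omega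
  set τ : ℝ := (s : ℝ) - (k : ℝ) with hτdef
  have hτt : (t : ℝ) = τ := by
    rw [htdef, hτdef]
    exact Nat.cast_sub (by omega)
  have hτpos : (0 : ℝ) < τ := by
    rw [← hτt]
    exact_mod_cast (by omega : 0 < t)
  set CsR : ℝ := (s : ℝ) * (2 * 3 ^ (s - 1)) with hCs
  have hCspos : 0 < CsR := by
    rw [hCs]
    have : (0:ℝ) < (s:ℝ) := by exact_mod_cast hs0
    positivity
  set K1 : ℝ := 3 ^ (s - 1) * (2 * CsR) with hK1
  have hK1pos : 0 < K1 := by rw [hK1]; positivity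
  set c : ℝ := min 1 ((η / K1) ^ (1 / (t : ℝ))) with hc
  have hcpos : 0 < c := lt_min one_pos (Real.rpow_pos_of_pos (by positivity) _)
  have hc1 : c ≤ 1 := min_le_left _ _
  have hct : K1 * c ^ t ≤ η := by
    have h1 : c ^ t ≤ ((η / K1) ^ (1 / (t : ℝ))) ^ t :=
      pow_le_pow_left₀ hcpos.le (min_le_right _ _) t
    have h2 : ((η / K1) ^ (1 / (t : ℝ))) ^ t = η / K1 := by
      rw [← Real.rpow_natCast ((η / K1) ^ (1 / (t : ℝ))) t,
        ← Real.rpow_mul (by positivity), one_div,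
        inv_mul_cancel₀ (by exact_mod_cast (by omega : t ≠ 0) : (t : ℝ) ≠ 0),
        Real.rpow_one]
    calc K1 * c ^ t ≤ K1 * (η / K1) := by
          apply mul_le_mul_of_nonneg_left _ hK1pos.le
          rw [← h2]
          exact h1
      _ = η := by field_simp
  refine ⟨c, hcpos, ?_⟩
  intro A hA
  have hA0 : (0 : ℝ) < A := by linarith
  set N : ℕ := ⌊A⌋₊ with hN
  have hN1 : 1 ≤ N := Nat.le_floor (by exact_mod_cast hA)
  have hNA : (N : ℝ) ≤ A := Nat.floor_le hA0.le
  set R : ℝ := c * A ^ (1 / τ) with hR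
  have hRpos : 0 < R := mul_pos hcpos (Real.rpow_pos_of_pos hA0 _)
  set L : ℕ := ⌊R⌋₊ with hL
  have hLR : (L : ℝ) ≤ R := Nat.floor_le hRpos.le
  have hpow_t : (A ^ (1 / τ)) ^ t = A := by
    rw [← Real.rpow_natCast (A ^ (1 / τ)) t, ← Real.rpow_mul hA0.le, hτt,
      one_div, inv_mul_cancel₀ hτpos.ne', Real.rpow_one]
  have hkτ : (k : ℝ) ≤ τ := by
    rw [← hτt]
    exact_mod_cast htk
  have hpow_k : (A ^ (1 / τ)) ^ k ≤ A := by
    rw [← Real.rpow_natCast (A ^ (1 / τ)) k, ← Real.rpow_mul hA0.le]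
    calc A ^ (1 / τ * k) ≤ A ^ (1 : ℝ) := by
          apply Real.rpow_le_rpow_of_exponent_le hA
          rw [div_mul_eq_mul_div, one_mul, div_le_one hτpos]
          exact hkτ
      _ = A := Real.rpow_one A
  have hRk : R ^ k ≤ A := by
    rw [hR, mul_pow]
    calc c ^ k * (A ^ (1 / τ)) ^ k ≤ 1 * A := by
          apply mul_le_mul (pow_le_one₀ hcpos.le hc1) hpow_k (by positivity) one_pos.le
      _ = A := one_mul A
  have hRt : R ^ t = c ^ t * A := by rw [hR, mul_pow, hpow_t]
  set Xfin : Finset (Fin s → ℤ) := (ibox s L).erase 0 with hXfin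
  set Sols : (Fin s → ℤ) → Finset (Fin s → ℤ) :=
    fun x => (ibox s N).filter (fun a => ∑ j, a j * (x j) ^ k = 0) with hSols
  set F : Finset (Fin s → ℤ) :=
    (ibox s N).filter (fun a => ∃ x ∈ Xfin, ∑ j, a j * (x j) ^ k = 0) with hF
  -- the exceptional set is contained in F
  have hEsub : {a : Fin s → ℤ | (∀ j, a j ≠ 0 ∧ (|a j| : ℝ) ≤ A) ∧
      ∃ x : Fin s → ℤ, x ≠ 0 ∧
        (∀ j, (|x j| : ℝ) ≤ c * (maxnorm s a) ^ (1 / τ)) ∧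
        ∑ j, a j * x j ^ k = 0} ⊆ (F : Set (Fin s → ℤ)) := by
    intro a ha
    obtain ⟨ha1, x, hx0, hxb, hxe⟩ := ha
    have habsN : ∀ j, (a j).natAbs ≤ N := by
      intro j
      apply Nat.le_floor
      have h1 := (ha1 j).2
      rw [show ((a j).natAbs : ℝ) = |((a j : ℤ) : ℝ)| by rw [Nat.cast_natAbs, Int.cast_abs]]
      exact h1
    have hmax_le : maxnorm s a ≤ A := by
      unfold maxnorm
      have h2 : (Finset.univ.sup fun j => (a j).natAbs) ≤ N :=
        Finset.sup_le (fun j _ => habsN j)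
      calc ((Finset.univ.sup fun j => (a j).natAbs : ℕ) : ℝ) ≤ (N : ℝ) := by
            exact_mod_cast h2
        _ ≤ A := hNA
    have hmax0 : 0 ≤ maxnorm s a := by unfold maxnorm; positivity
    have hxL : ∀ j, (x j).natAbs ≤ L := by
      intro j
      apply Nat.le_floor
      have h1 := hxb j
      rw [show ((x j).natAbs : ℝ) = |((x j : ℤ) : ℝ)| by rw [Nat.cast_natAbs, Int.cast_abs]]
      have h2 : c * (maxnorm s a) ^ (1 / τ) ≤ R := by
        rw [hR]
        apply mul_le_mul_of_nonneg_left _ hcpos.le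
        exact Real.rpow_le_rpow hmax0 hmax_le (by positivity)
      exact le_trans h1 h2
    rw [Finset.mem_coe, hF, Finset.mem_filter]
    refine ⟨mem_ibox.mpr habsN, x, ?_, hxe⟩
    rw [hXfin, Finset.mem_erase]
    exact ⟨hx0, mem_ibox.mpr hxL⟩
  have h_ncard : ((Set.ncard {a : Fin s → ℤ | (∀ j, a j ≠ 0 ∧ (|a j| : ℝ) ≤ A) ∧
      ∃ x : Fin s → ℤ, x ≠ 0 ∧
        (∀ j, (|x j| : ℝ) ≤ c * (maxnorm s a) ^ (1 / τ)) ∧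
        ∑ j, a j * x j ^ k = 0} : ℕ) : ℝ) ≤ (F.card : ℝ) := by
    have h1 := Set.ncard_le_ncard hEsub F.finite_toSet
    rw [Set.ncard_coe_finset] at h1
    exact_mod_cast h1
  -- union bound
  have hFsub : F ⊆ Xfin.biUnion Sols := by
    intro a ha
    obtain ⟨haB, x, hx, he⟩ := Finset.mem_filter.mp ha
    exact Finset.mem_biUnion.mpr ⟨x, hx, Finset.mem_filter.mpr ⟨haB, he⟩⟩
  have hcard1 : F.card ≤ ∑ x ∈ Xfin, (Sols x).card :=
    le_trans (Finset.card_le_card hFsub) Finset.card_biUnion_le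
  -- per-x bound
  have hperx : ∀ x ∈ Xfin, ((Sols x).card : ℝ)
      ≤ (3 * A) ^ (s - 1)
        * (((Finset.univ.sup fun j => ((yv x) j).natAbs : ℕ) : ℝ))⁻¹ ^ k := by
    intro x hx
    obtain ⟨hx0, hxbox⟩ := Finset.mem_erase.mp hx
    obtain ⟨hg0, heq, hprim, habs⟩ := gcd_decomp x hx0
    set Yx : ℕ := Finset.univ.sup fun j => ((yv x) j).natAbs with hYx
    have hYx1 : 1 ≤ Yx := by
      have hyy : ∃ j, yv x j ≠ 0 := by
        by_contra hno
        push_neg at hno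
        apply hx0
        funext j
        rw [Pi.zero_apply, heq j, hno j, mul_zero]
      obtain ⟨j, hj⟩ := hyy
      calc 1 ≤ (yv x j).natAbs := by omega
        _ ≤ Yx := Finset.le_sup (f := fun j => ((yv x) j).natAbs) (Finset.mem_univ j)
    have hYxL : Yx ≤ L := by
      apply Finset.sup_le
      intro j _
      calc (yv x j).natAbs ≤ (x j).natAbs := by
            rw [habs j]
            exact Nat.le_mul_of_pos_left _ hg0
        _ ≤ L := mem_ibox.mp hxbox j
    have hgk : ((gv x : ℤ)) ^ k ≠ 0 := by
      apply pow_ne_zero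
      exact_mod_cast (by omega : gv x ≠ 0)
    have hSolseq : Sols x = (ibox s N).filter
        (fun a => ∑ j, a j * ((yv x) j) ^ k = 0) := by
      rw [hSols]
      apply Finset.filter_congr
      intro a _
      have hfac : ∑ j, a j * (x j) ^ k
          = (gv x : ℤ) ^ k * ∑ j, a j * ((yv x) j) ^ k := by
        rw [Finset.mul_sum]
        apply Finset.sum_congr rfl
        intro j _
        rw [heq j, mul_pow]
        ring
      constructor
      · intro h0
        rw [hfac] at h0
        rcases mul_eq_zero.mp h0 with h | h
        · exact absurd h hgk
        · exact h
      · intro h0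
        rw [hfac, h0, mul_zero]
    have hcore := core_count (k := k) hs0 (yv x) hprim N
    have hcore' : (Sols x).card * Yx ^ k ≤ (2 * N + Yx ^ k) ^ (s - 1) := by
      rw [hSolseq]
      exact hcore
    have hYkA : ((Yx : ℝ)) ^ k ≤ A := by
      calc ((Yx : ℝ)) ^ k ≤ R ^ k := by
            apply pow_le_pow_left₀ (by positivity)
            calc (Yx : ℝ) ≤ (L : ℝ) := by exact_mod_cast hYxL
              _ ≤ R := hLR
        _ ≤ A := hRk
    have h3A : ((2 * N + Yx ^ k : ℕ) : ℝ) ≤ 3 * A := by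
      push_cast
      push_cast at hYkA
      linarith [hNA]
    have hcast : ((Sols x).card : ℝ) * ((Yx : ℝ)) ^ k ≤ (3 * A) ^ (s - 1) := by
      calc ((Sols x).card : ℝ) * ((Yx : ℝ)) ^ k
          = (((Sols x).card * Yx ^ k : ℕ) : ℝ) := by push_cast; ring
        _ ≤ (((2 * N + Yx ^ k) ^ (s - 1) : ℕ) : ℝ) := by exact_mod_cast hcore'
        _ = (((2 * N + Yx ^ k : ℕ) : ℝ)) ^ (s - 1) := by push_cast; ring
        _ ≤ (3 * A) ^ (s - 1) := pow_le_pow_left₀ (by positivity) h3A _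
    have hYpos : (0 : ℝ) < ((Yx : ℕ) : ℝ) := by
      have h9 : 0 < Yx := hYx1
      exact_mod_cast h9
    calc ((Sols x).card : ℝ)
        = ((Sols x).card : ℝ) * ((Yx : ℝ)) ^ k * (((Yx : ℝ))⁻¹) ^ k := by
          rw [mul_assoc, ← mul_pow, mul_inv_cancel₀ hYpos.ne', one_pow, mul_one]
      _ ≤ (3 * A) ^ (s - 1) * (((Yx : ℝ))⁻¹) ^ k :=
          mul_le_mul_of_nonneg_right hcast (by positivity)
  have hsum1 : (F.card : ℝ) ≤ (3 * A) ^ (s - 1)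
      * ∑ x ∈ Xfin, (((Finset.univ.sup fun j => ((yv x) j).natAbs : ℕ) : ℝ))⁻¹ ^ k := by
    calc (F.card : ℝ) ≤ ((∑ x ∈ Xfin, (Sols x).card : ℕ) : ℝ) := by exact_mod_cast hcard1
      _ = ∑ x ∈ Xfin, ((Sols x).card : ℝ) := by push_cast; rfl
      _ ≤ ∑ x ∈ Xfin, (3 * A) ^ (s - 1)
          * (((Finset.univ.sup fun j => ((yv x) j).natAbs : ℕ) : ℝ))⁻¹ ^ k :=
          Finset.sum_le_sum hperx
      _ = (3 * A) ^ (s - 1)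
          * ∑ x ∈ Xfin, (((Finset.univ.sup fun j => ((yv x) j).natAbs : ℕ) : ℝ))⁻¹ ^ k := by
          rw [Finset.mul_sum]
  -- bound the sum S
  set S : ℝ := ∑ x ∈ Xfin,
    (((Finset.univ.sup fun j => ((yv x) j).natAbs : ℕ) : ℝ))⁻¹ ^ k with hS
  set h : ℕ × (Fin s → ℤ) → ℝ := fun p =>
    if (Finset.univ.sup fun j => (p.2 j).natAbs) * p.1 ≤ L
    then (((Finset.univ.sup fun j => (p.2 j).natAbs : ℕ) : ℝ))⁻¹ ^ k else 0 with hh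
  have hhnn : ∀ p, 0 ≤ h p := by
    intro p
    rw [hh]
    dsimp only
    split <;> positivity
  have hSeq : S = ∑ x ∈ Xfin, h (gv x, yv x) := by
    apply Finset.sum_congr rfl
    intro x hx
    obtain ⟨hx0, hxbox⟩ := Finset.mem_erase.mp hx
    have hsupx := sup_mul_eq hs0 x hx0
    have hcond : (Finset.univ.sup fun j => ((yv x) j).natAbs) * gv x ≤ L := by
      rw [mul_comm, ← hsupx]
      exact Finset.sup_le (fun j _ => mem_ibox.mp hxbox j)
    rw [hh]
    dsimp only
    rw [if_pos hcond]
  have hinj : ∀ x ∈ Xfin, ∀ x' ∈ Xfin,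
      (gv x, yv x) = (gv x', yv x') → x = x' := by
    intro x hx x' hx' hpair
    obtain ⟨hx0, -⟩ := Finset.mem_erase.mp hx
    obtain ⟨hx0', -⟩ := Finset.mem_erase.mp hx'
    obtain ⟨-, heq, -, -⟩ := gcd_decomp x hx0
    obtain ⟨-, heq', -, -⟩ := gcd_decomp x' hx0'
    have h1 : gv x = gv x' := congrArg Prod.fst hpair
    have h2 : yv x = yv x' := congrArg Prod.snd hpair
    funext j
    rw [heq j, heq' j, h1, h2]
  have himg : Xfin.image (fun x => (gv x, yv x)) ⊆ (Finset.Icc 1 L) ×ˢ Xfin := by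
    intro p hp
    obtain ⟨x, hx, hpx⟩ := Finset.mem_image.mp hp
    obtain ⟨hx0, hxbox⟩ := Finset.mem_erase.mp hx
    obtain ⟨hg0, heq, hprim, habs⟩ := gcd_decomp x hx0
    rw [← hpx, Finset.mem_product]
    dsimp only
    constructor
    · rw [Finset.mem_Icc]
      refine ⟨hg0, ?_⟩
      have hxj : ∃ j, x j ≠ 0 := by
        by_contra hno
        push_neg at hno
        apply hx0
        funext j
        rw [Pi.zero_apply, hno j]
      obtain ⟨j, hj⟩ := hxj
      calc gv x ≤ (x j).natAbs :=
            Nat.le_of_dvd (by omega) (Finset.gcd_dvd (Finset.mem_univ j))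
        _ ≤ L := mem_ibox.mp hxbox j
    · rw [Finset.mem_erase]
      constructor
      · intro hy0
        apply hx0
        funext j
        rw [heq j, congrFun hy0 j]
        simp
      · apply mem_ibox.mpr
        intro j
        calc (yv x j).natAbs ≤ (x j).natAbs := by
              rw [habs j]
              exact Nat.le_mul_of_pos_left _ hg0
          _ ≤ L := mem_ibox.mp hxbox j
  have hSstep : S ≤ ∑ d ∈ Finset.Icc 1 L, ∑ y ∈ Xfin, h (d, y) := by
    rw [hSeq, ← Finset.sum_image (g := fun x => (gv x, yv x)) (f := h) hinj]
    calc ∑ p ∈ Xfin.image (fun x => (gv x, yv x)), h p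
        ≤ ∑ p ∈ (Finset.Icc 1 L) ×ˢ Xfin, h p :=
          Finset.sum_le_sum_of_subset_of_nonneg himg (fun p _ _ => hhnn p)
      _ = ∑ d ∈ Finset.Icc 1 L, ∑ y ∈ Xfin, h (d, y) := Finset.sum_product _ _ _
  have hinner : ∀ d ∈ Finset.Icc 1 L, ∑ y ∈ Xfin, h (d, y)
      ≤ CsR * (((L / d : ℕ)) : ℝ) ^ t := by
    intro d hd
    obtain ⟨hd1, hdL⟩ := Finset.mem_Icc.mp hd
    have hstep : ∑ y ∈ Xfin, h (d, y)
        = ∑ y ∈ Xfin.filter (fun y => (Finset.univ.sup fun j => (y j).natAbs) * d ≤ L),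
            (((Finset.univ.sup fun j => (y j).natAbs : ℕ) : ℝ))⁻¹ ^ k := by
      rw [Finset.sum_filter]
    rw [hstep]
    have hsub2 : Xfin.filter (fun y => (Finset.univ.sup fun j => (y j).natAbs) * d ≤ L)
        ⊆ (ibox s (L / d)).erase 0 := by
      intro y hy
      obtain ⟨hyX, hcond⟩ := Finset.mem_filter.mp hy
      obtain ⟨hy0, hybox⟩ := Finset.mem_erase.mp hyX
      rw [Finset.mem_erase]
      refine ⟨hy0, mem_ibox.mpr fun j => ?_⟩
      rw [Nat.le_div_iff_mul_le (by omega)]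
      calc (y j).natAbs * d ≤ (Finset.univ.sup fun j => (y j).natAbs) * d :=
            Nat.mul_le_mul_right d
              (Finset.le_sup (f := fun j => (y j).natAbs) (Finset.mem_univ j))
        _ ≤ L := hcond
    calc ∑ y ∈ Xfin.filter (fun y => (Finset.univ.sup fun j => (y j).natAbs) * d ≤ L),
            (((Finset.univ.sup fun j => (y j).natAbs : ℕ) : ℝ))⁻¹ ^ k
        ≤ ∑ y ∈ (ibox s (L / d)).erase 0,
            (((Finset.univ.sup fun j => (y j).natAbs : ℕ) : ℝ))⁻¹ ^ k :=
          Finset.sum_le_sum_of_subset_of_nonneg hsub2 (fun y _ _ => by positivity)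
      _ ≤ CsR * (((L / d : ℕ)) : ℝ) ^ t :=
          innerSumBound hs0 hk0 hks (L / d)
  have hS2 : S ≤ CsR * 2 * (c ^ t * A) := by
    calc S ≤ ∑ d ∈ Finset.Icc 1 L, ∑ y ∈ Xfin, h (d, y) := hSstep
      _ ≤ ∑ d ∈ Finset.Icc 1 L, CsR * (((L / d : ℕ)) : ℝ) ^ t :=
          Finset.sum_le_sum hinner
      _ ≤ ∑ d ∈ Finset.Icc 1 L, CsR * ((L : ℝ) ^ t * (((d : ℝ))⁻¹) ^ t) := by
          apply Finset.sum_le_sum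
          intro d hd
          obtain ⟨hd1, -⟩ := Finset.mem_Icc.mp hd
          apply mul_le_mul_of_nonneg_left _ hCspos.le
          have hdL2 : (((L / d : ℕ)) : ℝ) ≤ (L : ℝ) / (d : ℝ) := Nat.cast_div_le
          calc (((L / d : ℕ)) : ℝ) ^ t ≤ ((L : ℝ) / (d : ℝ)) ^ t :=
              pow_le_pow_left₀ (by positivity) hdL2 t
            _ = (L : ℝ) ^ t * (((d : ℝ))⁻¹) ^ t := by
                rw [div_pow, div_eq_mul_inv, inv_pow]
      _ = CsR * (L : ℝ) ^ t * ∑ d ∈ Finset.Icc 1 L, (((d : ℝ))⁻¹) ^ t := by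
          rw [Finset.mul_sum]
          apply Finset.sum_congr rfl
          intro d _
          ring
      _ ≤ CsR * (L : ℝ) ^ t * 2 := by
          apply mul_le_mul_of_nonneg_left (sum_inv_pow_le L t ht2) (by positivity)
      _ ≤ CsR * (c ^ t * A) * 2 := by
          have hLt : (L : ℝ) ^ t ≤ c ^ t * A := by
            rw [← hRt]
            exact pow_le_pow_left₀ (by positivity) hLR t
          apply mul_le_mul_of_nonneg_right _ (by norm_num : (0:ℝ) ≤ 2)
          exact mul_le_mul_of_nonneg_left hLt hCspos.le
      _ = CsR * 2 * (c ^ t * A) := by ring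
  have hfinal : (3 * A) ^ (s - 1) * (CsR * 2 * (c ^ t * A)) ≤ η * A ^ s := by
    have hsplit : (3 * A) ^ (s - 1) * (CsR * 2 * (c ^ t * A))
        = K1 * c ^ t * ((A : ℝ) ^ (s - 1) * A) := by
      rw [hK1, mul_pow]
      ring
    have hApow : (A : ℝ) ^ (s - 1) * A = A ^ s := by
      rw [← pow_succ]
      congr 1
      omega
    rw [hsplit, hApow]
    apply mul_le_mul_of_nonneg_right hct (by positivity)
  calc ((Set.ncard {a : Fin s → ℤ | (∀ j, a j ≠ 0 ∧ (|a j| : ℝ) ≤ A) ∧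
      ∃ x : Fin s → ℤ, x ≠ 0 ∧
        (∀ j, (|x j| : ℝ) ≤ c * (maxnorm s a) ^ (1 / τ)) ∧
        ∑ j, a j * x j ^ k = 0} : ℕ) : ℝ)
      ≤ (F.card : ℝ) := h_ncard
    _ ≤ (3 * A) ^ (s - 1) * S := hsum1
    _ ≤ (3 * A) ^ (s - 1) * (CsR * 2 * (c ^ t * A)) :=
        mul_le_mul_of_nonneg_left hS2 (by positivity)
    _ ≤ η * A ^ s := hfinal
    _ = η * A ^ (s : ℝ) := by rw [Real.rpow_natCast]
end

section
/- Let k ≥ 2, let p be a prime, let t ≥ 1, and let q be an integer with 1 ≤ q < p such that the congruence x^k ≡ q (mod p) has no solution (q is a k-th power non-residue modulo p). Then every x = (x_1,…,x_{2t}) ∈ ℤ^{2t} with x ≠ 0 satisfying (x_1^k − q x_2^k) + p(x_3^k − q x_4^k) + ⋯ + p^{t−1}(x_{2t−1}^k − q x_{2t}^k) = 0 has max_j |x_j| ≥ p. -/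
lemma aux_pair_zero (k p : ℕ) (hp : p.Prime) (q : ℤ)
    (hnonres : ¬ ∃ x : ℤ, (p : ℤ) ∣ x ^ k - q)
    (a b : ℤ) (ha : |a| < p) (hb : |b| < p)
    (hd : (p : ℤ) ∣ a ^ k - q * b ^ k) : a = 0 ∧ b = 0 := by
  haveI : Fact p.Prime := ⟨hp⟩
  have hcast : ((a : ZMod p)) ^ k = (q : ZMod p) * (b : ZMod p) ^ k := by
    have := (ZMod.intCast_zmod_eq_zero_iff_dvd _ p).mpr hd
    push_cast at this
    linear_combination this
  have hbz : (b : ZMod p) = 0 := by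
    by_contra hbz
    apply hnonres
    set u : ZMod p := (a : ZMod p) * (b : ZMod p)⁻¹ with hu
    refine ⟨((u.val : ℤ)), ?_⟩
    rw [← ZMod.intCast_zmod_eq_zero_iff_dvd]
    push_cast
    have huu : ((u.val : ZMod p)) = u := by simp [ZMod.natCast_val, ZMod.cast_id]
    rw [huu]
    have hbk : (b : ZMod p) ^ k ≠ 0 := pow_ne_zero _ hbz
    rw [hu, mul_pow, hcast, inv_pow, mul_assoc, mul_inv_cancel₀ hbk, mul_one, sub_self]
  have hpb : (p : ℤ) ∣ b := (ZMod.intCast_zmod_eq_zero_iff_dvd b p).mp hbz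
  have hb0 : b = 0 := Int.eq_zero_of_abs_lt_dvd hpb hb
  subst hb0
  have hpa : (p : ℤ) ∣ a ^ k := by
    have hk0 : k ≠ 0 := by
      rintro rfl
      simp at hd hcast
      exact hnonres ⟨1, by simpa using hd⟩
    simpa [zero_pow hk0] using hd
  have : (p : ℤ) ∣ a := (Nat.prime_iff_prime_int.mp hp).dvd_of_dvd_pow hpa
  exact ⟨Int.eq_zero_of_abs_lt_dvd this ha, rfl⟩

lemma aux_sum_zero (p : ℕ) (hp : p.Prime) :
    ∀ (t : ℕ) (c : ℕ → ℤ), (∀ i < t, (p : ℤ) ∣ c i → c i = 0) →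
      (∑ i ∈ Finset.range t, (p : ℤ) ^ i * c i = 0) → ∀ i < t, c i = 0 := by
  intro t
  induction t with
  | zero => intro c _ _ i hi; omega
  | succ n ih =>
    intro c hc hsum i hi
    rw [Finset.sum_range_succ'] at hsum
    have hsum' : (p : ℤ) * (∑ i ∈ Finset.range n, (p : ℤ) ^ i * c (i + 1)) + c 0 = 0 := by
      rw [← hsum, Finset.mul_sum]
      simp [pow_succ]
      ring_nf
    have hc0 : c 0 = 0 := by
      apply hc 0 (by omega)
      exact ⟨-(∑ i ∈ Finset.range n, (p : ℤ) ^ i * c (i + 1)), by linarith⟩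
    have hpne : (p : ℤ) ≠ 0 := by exact_mod_cast hp.ne_zero
    have hsum'' : ∑ i ∈ Finset.range n, (p : ℤ) ^ i * c (i + 1) = 0 := by
      have : (p : ℤ) * (∑ i ∈ Finset.range n, (p : ℤ) ^ i * c (i + 1)) = 0 := by linarith
      exact (mul_eq_zero.mp this).resolve_left hpne
    have := ih (fun j => c (j + 1)) (fun j hj => hc (j + 1) (by omega)) hsum''
    rcases Nat.eq_zero_or_pos i with rfl | hpos
    · exact hc0
    · obtain ⟨j, rfl⟩ := Nat.exists_eq_add_of_lt hpos
      simpa using this (0 + j) (by omega)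

/-- If `q` is a `k`-th power non-residue modulo the prime `p`, then any nonzero integral
solution of `(x_1^k - q x_2^k) + p(x_3^k - q x_4^k) + ⋯ + p^(t-1)(x_{2t-1}^k - q x_{2t}^k) = 0`
satisfies `max_j |x_j| ≥ p`. -/
theorem no_small_solution_example (k : ℕ) (hk : 2 ≤ k) (p : ℕ) (hp : p.Prime)
    (t : ℕ) (ht : 1 ≤ t) (q : ℤ) (hq1 : 1 ≤ q) (hqp : q < (p : ℤ))
    (hnonres : ¬ ∃ x : ℤ, (p : ℤ) ∣ x ^ k - q)
    (x : Fin (2 * t) → ℤ) (hx : x ≠ 0)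
    (heq : ∑ i : Fin t, (p : ℤ) ^ (i : ℕ) *
        (x ⟨2 * i.1, by have := i.2; omega⟩ ^ k - q * x ⟨2 * i.1 + 1, by have := i.2; omega⟩ ^ k)
      = 0) :
    ∃ j, (p : ℤ) ≤ |x j| := by
  by_contra hcon
  push_neg at hcon
  set c : ℕ → ℤ := fun i =>
    if h : i < t then x ⟨2 * i, by omega⟩ ^ k - q * x ⟨2 * i + 1, by omega⟩ ^ k else 0 with hcdef
  have hsum : ∑ i ∈ Finset.range t, (p : ℤ) ^ i * c i = 0 := by
    rw [← Fin.sum_univ_eq_sum_range (fun i => (p : ℤ) ^ i * c i) t, ← heq]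
    apply Finset.sum_congr rfl
    intro i _
    simp only [hcdef, dif_pos i.2]
  have hzero : ∀ i, ∀ _ : i < t, x ⟨2 * i, by omega⟩ = 0 ∧ x ⟨2 * i + 1, by omega⟩ = 0 := by
    intro i hi
    have hci := aux_sum_zero p hp t c (fun j hj hdvd => by
      simp only [hcdef, dif_pos hj] at hdvd ⊢
      have := aux_pair_zero k p hp q hnonres _ _ (hcon _) (hcon _) hdvd
      rw [this.1, this.2]; simp [zero_pow (show k ≠ 0 by omega)]) hsum i hi
    simp only [hcdef, dif_pos hi] at hci
    exact aux_pair_zero k p hp q hnonres _ _ (hcon _) (hcon _) (by rw [hci]; exact dvd_zero _)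
  apply hx
  funext j
  have hj2 := j.2
  rcases Nat.even_or_odd j.1 with ⟨m, hm⟩ | ⟨m, hm⟩
  · have hj : j = ⟨2 * m, by omega⟩ := Fin.ext (by simp only [Fin.val_mk]; omega)
    rw [hj]; exact (hzero m (by omega)).1
  · have hj : j = ⟨2 * m + 1, by omega⟩ := Fin.ext (by simp only [Fin.val_mk]; omega)
    rw [hj]; exact (hzero m (by omega)).2
end

section
/- Let n ≥ 1 and 1 ≤ r ≤ n, and let b_1,…,b_r ∈ ℤ^n be linearly independent over ℝ; let Λ = ℤb_1 + ⋯ + ℤb_r. Define d(Λ) = sqrt(det((b_i · b_j)_{1≤i,j≤r})) (the discriminant of Λ), and G(Λ) = gcd over all r-element subsets I of {1,…,n} of det(B_I), where B_I denotes the r×r submatrix, with rows indexed by I, of the n×r matrix B with columns b_1,…,b_r. Let Λ* = {x ∈ ℤ^n : b_j · x = 0 for 1 ≤ j ≤ r} be the dual lattice, a sublattice of ℤ^n of rank n − r, with discriminant d(Λ*) defined analogously from any ℤ-basis of Λ* (with the convention d(Λ*) = 1 when r = n). Then d(Λ*) = d(Λ)/G(Λ). -/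
open Matrix

theorem det_mul_expand {R : Type*} [CommRing R] {r n : ℕ}
    (Y : Matrix (Fin r) (Fin n) R) (X : Matrix (Fin n) (Fin r) R) :
    (Y * X).det = ∑ g : Fin r → Fin n, (∏ i, Y i (g i)) * (X.submatrix g id).det := by
  have h : (Y * X) = Matrix.of fun i => ∑ k, Y i k • X k := by
    ext i j; simp [Matrix.mul_apply]
  rw [h]
  calc (Matrix.of fun i => ∑ k, Y i k • X k).det
      = (Matrix.detRowAlternating : AlternatingMap R (Fin r → R) R (Fin r)).toMultilinearMap
          (fun i => ∑ k : Fin n, Y i k • X k) := rfl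
    _ = ∑ g : Fin r → Fin n,
          (Matrix.detRowAlternating : AlternatingMap R (Fin r → R) R (Fin r)).toMultilinearMap
          (fun i => Y i (g i) • X (g i)) := by exact MultilinearMap.map_sum _ fun i k => Y i k • X k
    _ = ∑ g : Fin r → Fin n, (∏ i, Y i (g i)) * (X.submatrix g id).det := by
        refine Finset.sum_congr rfl fun g _ => ?_
        rw [MultilinearMap.map_smul_univ]
        rfl

set_option maxHeartbeats 1000000 in
/-- **Lemma 2.1.** Let `Λ ⊆ ℤ^n` be the lattice of rank `r` spanned by `b_1, …, b_r`
(linearly independent over `ℝ`), with discriminant `d(Λ) = sqrt(det(Gram(b)))`, and let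
`G(Λ)` be the gcd of the `r × r` minors of the matrix with columns `b_1, …, b_r` (computed
here as the gcd of `det(b_{g(i)} entries)` over all row selections `g : Fin r → Fin n`;
non-injective selections contribute `0` and do not affect the gcd). If `c_1, …, c_{n-r}`
is any `ℤ`-basis of the dual lattice `Λ* = {x ∈ ℤ^n : b_j ⬝ x = 0 for all j}`, then
`sqrt(det(Gram(c))) = d(Λ) / G(Λ)`. -/
theorem dual_lattice_discriminant (n r : ℕ) (hn : 1 ≤ n) (hr : 1 ≤ r) (hrn : r ≤ n)
    (b : Fin r → Fin n → ℤ)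
    (hb : LinearIndependent ℝ (fun i => fun j => (b i j : ℝ)))
    (c : Fin (n - r) → Fin n → ℤ)
    (hc_indep : LinearIndependent ℤ c)
    (hc_span : (Submodule.span ℤ (Set.range c) : Set (Fin n → ℤ)) =
      {x : Fin n → ℤ | ∀ i, ∑ j, b i j * x j = 0}) :
    Real.sqrt ((Matrix.of fun i j : Fin (n - r) => ((∑ l, c i l * c j l : ℤ) : ℝ)).det) =
      Real.sqrt ((Matrix.of fun i j : Fin r => ((∑ l, b i l * b j l : ℤ) : ℝ)).det) /
        ((Finset.univ.gcd fun g : Fin r → Fin n =>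
          (Matrix.of fun i j : Fin r => b j (g i)).det : ℤ) : ℝ) := by
  classical
  -- ℤ-linear independence of b
  have hbZ : LinearIndependent ℤ b := by
    have h1 : LinearIndependent ℤ (fun i => fun j => (b i j : ℝ)) :=
      hb.restrict_scalars (by intro x y h; simpa using h)
    let f : (Fin n → ℤ) →ₗ[ℤ] (Fin n → ℝ) :=
      { toFun := fun x j => (x j : ℝ)
        map_add' := fun x y => by funext j; simp
        map_smul' := fun m x => by funext j; simp }
    exact LinearIndependent.of_comp f h1
  set Λ : Submodule ℤ (Fin n → ℤ) := Submodule.span ℤ (Set.range b) with hΛ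
  let bB : Module.Basis (Fin r) ℤ Λ := Module.Basis.span hbZ
  obtain ⟨m, e, bN, femb, a, hsnf⟩ := Submodule.smithNormalForm (Pi.basisFun ℤ (Fin n)) Λ
  have hm : r = m := by simpa using Fintype.card_congr (Module.Basis.indexEquiv bB bN)
  subst hm
  have ha : ∀ i, a i ≠ 0 := by
    intro i h0
    refine bN.ne_zero i ?_
    have h1 : (bN i : Fin n → ℤ) = 0 := by rw [hsnf i, h0, zero_smul]
    exact Subtype.ext h1
  -- matrices
  set W : Matrix (Fin n) (Fin n) ℤ := Matrix.of fun k l => e k l with hWdef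
  have hW : IsUnit W.det := by
    have h1 := (Pi.basisFun ℤ (Fin n)).isUnit_det e
    rw [Module.Basis.det_apply] at h1
    have htm : (Pi.basisFun ℤ (Fin n)).toMatrix ⇑e = W.transpose := by
      ext i j; simp [Module.Basis.toMatrix_apply, hWdef]
    rwa [htm, Matrix.det_transpose] at h1
  set Q : Matrix (Fin n) (Fin n) ℤ := W⁻¹ with hQdef
  have hWQ : W * Q = 1 := Matrix.mul_nonsing_inv W hW
  have hQW : Q * W = 1 := Matrix.nonsing_inv_mul W hW
  set V : Matrix (Fin r) (Fin r) ℤ := bN.toMatrix ⇑bB with hVdef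
  have hVunit : IsUnit V.det := by
    have h1 := bN.isUnit_det bB
    rwa [Module.Basis.det_apply] at h1
  have hbV : ∀ j l, b j l = ∑ i, V i j * (a i * e (femb i) l) := by
    intro j l
    have h := bN.sum_toMatrix_smul_self (v := ⇑bB) (j := j)
    have h2 : ((∑ i, V i j • bN i : Λ) : Fin n → ℤ) l = ((bB j : Λ) : Fin n → ℤ) l := by
      rw [h]
    rw [Module.Basis.span_apply] at h2
    rw [show b j l = _ from h2.symm]
    push_cast [hsnf]
    simp [Finset.sum_apply]
  set Ef : Matrix (Fin r) (Fin n) ℤ := Matrix.of fun i l => e (femb i) l with hEfdef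
  set Z : Matrix (Fin r) (Fin n) ℤ := Matrix.of fun i l => a i * e (femb i) l with hZdef
  set B : Matrix (Fin r) (Fin n) ℤ := Matrix.of b with hBdef
  have hB : B = Vᵀ * Z := by
    ext j l
    simpa [Matrix.mul_apply, hBdef, hZdef] using hbV j l
  have hZ : Z = Matrix.diagonal a * Ef := by
    ext i l; simp [hZdef, hEfdef, Matrix.diagonal_mul]
  have hdetV2 : V.det ^ 2 = 1 := by
    rcases Int.isUnit_iff.mp hVunit with h | h <;> rw [h] <;> ring
  have hdetW2 : W.det ^ 2 = 1 := by
    rcases Int.isUnit_iff.mp hW with h | h <;> rw [h] <;> ring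
  have hGB : (B * Bᵀ).det = (∏ i, a i)^2 * (Ef * Efᵀ).det := by
    have h1 : B * Bᵀ = Vᵀ * (Matrix.diagonal a * (Ef * Efᵀ) * Matrix.diagonal a) * V := by
      rw [hB, hZ]
      simp only [Matrix.transpose_mul, Matrix.transpose_transpose, Matrix.diagonal_transpose]
      noncomm_ring [Matrix.mul_assoc]
    rw [h1]
    simp only [Matrix.det_mul, Matrix.det_transpose, Matrix.det_diagonal]
    ring_nf
    rw [show V.det ^ 2 = 1 from hdetV2]
    ring
  -- the gcd of minors
  set G : ℤ := Finset.univ.gcd (fun g : Fin r → Fin n =>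
      (Matrix.of fun i j : Fin r => b j (g i)).det) with hGdef
  have hGgVal : ∀ g : Fin r → Fin n,
      (Matrix.of fun i j : Fin r => b j (g i)).det
        = (V.det * ∏ i, a i) * (Efᵀ.submatrix g id).det := by
    intro g
    have h1 : (Matrix.of fun i j : Fin r => b j (g i)) = (Bᵀ.submatrix g id) := by
      ext i j; simp [hBdef]
    have h2 : Bᵀ.submatrix g id = (Efᵀ.submatrix g id) * (Matrix.diagonal a * V) := by
      rw [hB, hZ]
      ext i j
      simp [Matrix.mul_apply, Matrix.submatrix_apply, Finset.mul_sum, Finset.sum_mul]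
      rw [Finset.sum_comm]
      refine Finset.sum_congr rfl fun k _ => Finset.sum_congr rfl fun k' _ => by ring
    rw [h1, h2, Matrix.det_mul, Matrix.det_mul, Matrix.det_diagonal]
    ring
  have hgcd1 : Finset.univ.gcd (fun g : Fin r → Fin n => (Efᵀ.submatrix g id).det) = 1 := by
    have hYX : (Matrix.of fun (j : Fin r) (l : Fin n) => Q l (femb j)) * Efᵀ = 1 := by
      ext j j'
      have h3 : (∑ l, e (femb j') l * Q l (femb j)) = if femb j' = femb j then 1 else 0 := by
        have h0 := congrFun (congrFun hWQ (femb j')) (femb j)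
        simpa [Matrix.mul_apply, Matrix.one_apply, hWdef] using h0
      have h5 : (∑ l, Q l (femb j) * e (femb j') l) = if j = j' then 1 else 0 := by
        rw [Finset.sum_congr rfl fun l _ => mul_comm _ _, h3]
        simp [femb.injective.eq_iff, eq_comm]
      simpa [Matrix.mul_apply, Matrix.one_apply, hEfdef] using h5
    have hexp := det_mul_expand (Matrix.of fun (j : Fin r) (l : Fin n) => Q l (femb j)) Efᵀ
    rw [hYX, Matrix.det_one] at hexp
    have hdvd : Finset.univ.gcd (fun g : Fin r → Fin n => (Efᵀ.submatrix g id).det) ∣ 1 := by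
      rw [hexp]
      exact Finset.dvd_sum fun g _ => Dvd.dvd.mul_left (Finset.gcd_dvd (Finset.mem_univ g)) _
    rw [← Finset.normalize_gcd]
    exact normalize_eq_one.mpr (isUnit_of_dvd_one hdvd)
  have hGval : G = normalize (V.det * ∏ i, a i) := by
    rw [hGdef, show (fun g : Fin r → Fin n => (Matrix.of fun i j : Fin r => b j (g i)).det)
        = fun g => (V.det * ∏ i, a i) * (Efᵀ.submatrix g id).det from funext hGgVal,
      Finset.gcd_mul_left, hgcd1, mul_one]
  have hG2 : G ^ 2 = (∏ i, a i) ^ 2 := by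
    have h4 : G ^ 2 = (V.det * ∏ i, a i) ^ 2 := by
      rw [hGval, ← Int.abs_eq_normalize, sq_abs]
    rw [h4, mul_pow, hdetV2, one_mul]
  -- the complement index map
  have hcardr : Fintype.card {x : Fin n // x ∈ Set.range femb} = r := by
    rw [Fintype.card_congr (Equiv.ofInjective femb femb.injective).symm, Fintype.card_fin]
  have hcard : Fintype.card {x : Fin n // ¬ x ∈ Set.range femb} = n - r := by
    rw [Fintype.card_subtype_compl, hcardr, Fintype.card_fin]
  let e2 : Fin (n - r) ≃ {x : Fin n // ¬ x ∈ Set.range femb} :=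
    (Fintype.equivFinOfCardEq hcard).symm
  let σ : (Fin r ⊕ Fin (n - r)) ≃ Fin n :=
    (Equiv.sumCongr (Equiv.ofInjective femb femb.injective) e2).trans
      (Equiv.sumCompl (fun x => x ∈ Set.range femb))
  have hσl : ∀ i : Fin r, σ (Sum.inl i) = femb i := fun i => rfl
  set t : Fin (n - r) → Fin n := fun k => σ (Sum.inr k) with htdef
  have ht : ∀ k, t k ∉ Set.range femb := fun k => (e2 k).2
  have htinj : Function.Injective t := fun k k' h =>
    Sum.inr_injective (σ.injective h)
  have hft : ∀ i k, femb i ≠ t k := fun i k h => ht k ⟨i, h⟩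
  set Φ : Matrix (Fin (n - r)) (Fin n) ℤ := Matrix.of fun k l => Q l (t k) with hΦdef
  set φ : Fin (n - r) → Fin n → ℤ := fun k l => Q l (t k) with hφdef
  have hEQ : ∀ mx kx : Fin n, (∑ l, e mx l * Q l kx) = if mx = kx then 1 else 0 := by
    intro mx kx
    have h0 := congrFun (congrFun hWQ mx) kx
    simpa [Matrix.mul_apply, Matrix.one_apply, hWdef] using h0
  -- rows of Φ lie in the dual lattice
  have hbφ : ∀ i k, (∑ j, b i j * φ k j) = 0 := by
    intro i k
    have h1 : (∑ j, b i j * φ k j)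
        = ∑ j : Fin n, ∑ mι : Fin r, V mι i * a mι * (e (femb mι) j * Q j (t k)) := by
      refine Finset.sum_congr rfl fun j _ => ?_
      rw [hbV i j, Finset.sum_mul]
      exact Finset.sum_congr rfl fun mι _ => by simp only [hφdef]; ring
    rw [h1, Finset.sum_comm]
    refine Finset.sum_eq_zero fun mι _ => ?_
    rw [← Finset.mul_sum, hEQ, if_neg (hft mι k), mul_zero]
  have hφK : ∀ k, φ k ∈ Submodule.span ℤ (Set.range c) := by
    intro k
    have hx : φ k ∈ {x : Fin n → ℤ | ∀ i, ∑ j, b i j * x j = 0} := fun i => hbφ i k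
    rw [← hc_span] at hx
    exact hx
  -- every dual vector is a ℤ-combination of rows of Φ
  have hKspan : ∀ x : Fin n → ℤ, (∀ i, ∑ j, b i j * x j = 0) →
      x ∈ Submodule.span ℤ (Set.range φ) := by
    intro x hx
    have hfun : ∀ y ∈ Λ, (∑ j, y j * x j) = 0 := by
      intro y hy
      rw [hΛ] at hy
      induction hy using Submodule.span_induction with
      | mem y hy => obtain ⟨i, rfl⟩ := hy; exact hx i
      | zero => simp
      | add y z _ _ hy hz => simp [add_mul, Finset.sum_add_distrib, hy, hz]
      | smul s y _ hy =>
          simp only [Pi.smul_apply, smul_eq_mul, mul_assoc, ← Finset.mul_sum, hy, mul_zero]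
    have hz : ∀ mι : Fin r, (∑ j, e (femb mι) j * x j) = 0 := by
      intro mι
      have hmem : (a mι • e (femb mι) : Fin n → ℤ) ∈ Λ := by
        rw [← hsnf mι]; exact (bN mι).2
      have h2 := hfun _ hmem
      have h3 : a mι * (∑ j, e (femb mι) j * x j) = 0 := by
        rw [Finset.mul_sum, ← h2]
        exact Finset.sum_congr rfl fun j _ => by simp [mul_assoc]
      exact (mul_eq_zero.mp h3).resolve_left (ha mι)
    have hxexp : x = ∑ k : Fin (n - r), (∑ j, e (t k) j * x j) • φ k := by
      funext l
      have h0 : x l = ∑ mι : Fin n, Q l mι * (∑ j, e mι j * x j) := by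
        have h1 : ∑ mι : Fin n, Q l mι * (∑ j, e mι j * x j)
            = ∑ j, (∑ mι : Fin n, Q l mι * e mι j) * x j := by
          simp only [Finset.mul_sum]
          rw [Finset.sum_comm]
          simp only [Finset.sum_mul]
          exact Finset.sum_congr rfl fun j _ => Finset.sum_congr rfl fun mι _ => by ring
        rw [h1]
        have h2 : ∀ j, (∑ mι : Fin n, Q l mι * e mι j) = if l = j then 1 else 0 := by
          intro j
          have h0 := congrFun (congrFun hQW l) j
          simpa [Matrix.mul_apply, Matrix.one_apply, hWdef] using h0
        simp [h2]
      rw [h0, ← Equiv.sum_comp σ (fun mι => Q l mι * (∑ j, e mι j * x j)), Fintype.sum_sum_type]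
      have hleft : ∀ i : Fin r, Q l (σ (Sum.inl i)) * (∑ j, e (σ (Sum.inl i)) j * x j) = 0 := by
        intro i
        rw [hσl i, hz i, mul_zero]
      rw [Finset.sum_eq_zero fun i _ => hleft i, zero_add]
      simp only [Finset.sum_apply, Pi.smul_apply, smul_eq_mul]
      exact Finset.sum_congr rfl fun k _ => by rw [hφdef]; ring
    rw [hxexp]
    exact Submodule.sum_mem _ fun k _ =>
      Submodule.smul_mem _ _ (Submodule.subset_span ⟨k, rfl⟩)
  -- change of basis between c and φ
  set C : Matrix (Fin (n - r)) (Fin n) ℤ := Matrix.of c with hCdef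
  have hcU : ∀ j, ∃ u : Fin (n - r) → ℤ, ∑ k, u k • φ k = c j := by
    intro j
    have hcK : c j ∈ Submodule.span ℤ (Set.range φ) := by
      apply hKspan
      have h1 : c j ∈ (Submodule.span ℤ (Set.range c) : Set (Fin n → ℤ)) :=
        Submodule.subset_span ⟨j, rfl⟩
      rw [hc_span] at h1
      exact h1
    exact (Submodule.mem_span_range_iff_exists_fun ℤ).1 hcK
  choose U hU using hcU
  have hφU : ∀ k, ∃ u : Fin (n - r) → ℤ, ∑ j, u j • c j = φ k := fun k =>
    (Submodule.mem_span_range_iff_exists_fun ℤ).1 (hφK k)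
  choose U' hU' using hφU
  have hCU : C = Matrix.of U * Φ := by
    ext j l
    have h1 := congrFun (hU j) l
    simp only [Finset.sum_apply, Pi.smul_apply, smul_eq_mul] at h1
    simpa [Matrix.mul_apply, hCdef, hΦdef] using h1.symm
  have hΦU : Φ = Matrix.of U' * C := by
    ext k l
    have h1 := congrFun (hU' k) l
    simp only [Finset.sum_apply, Pi.smul_apply, smul_eq_mul] at h1
    simpa [Matrix.mul_apply, hCdef, hΦdef] using h1.symm
  have hcancel : ∀ M N : Matrix (Fin (n - r)) (Fin (n - r)) ℤ, M * C = N * C → M = N := by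
    intro M N h
    ext i j
    have h1 : ∀ l, (∑ k, (M i k - N i k) * c k l) = 0 := by
      intro l
      have h2 := congrFun (congrFun h i) l
      simp only [Matrix.mul_apply, hCdef, Matrix.of_apply] at h2
      simp [sub_mul, Finset.sum_sub_distrib, h2]
    have h3 := Fintype.linearIndependent_iff.1 hc_indep (fun k => M i k - N i k) ?_ j
    · linarith [h3]
    · funext l
      simpa [Finset.sum_apply] using h1 l
  have hUU' : Matrix.of U * Matrix.of U' = 1 := by
    refine hcancel _ 1 ?_
    rw [Matrix.one_mul, Matrix.mul_assoc, ← hΦU, ← hCU]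
  have hdetU2 : (Matrix.of U).det ^ 2 = 1 := by
    have h1 : (Matrix.of U).det * (Matrix.of U').det = 1 := by
      rw [← Matrix.det_mul, hUU', Matrix.det_one]
    have h2 : IsUnit (Matrix.of U).det := IsUnit.of_mul_eq_one _ h1
    rcases Int.isUnit_iff.mp h2 with h | h <;> rw [h] <;> ring
  have hGC : (C * Cᵀ).det = (Φ * Φᵀ).det := by
    have h1 : C * Cᵀ = Matrix.of U * (Φ * Φᵀ) * (Matrix.of U)ᵀ := by
      rw [hCU]
      simp only [Matrix.transpose_mul]
      noncomm_ring [Matrix.mul_assoc]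
    rw [h1]
    simp only [Matrix.det_mul, Matrix.det_transpose]
    have h2 : (Matrix.of U).det * (Φ * Φᵀ).det * (Matrix.of U).det
        = (Matrix.of U).det ^ 2 * (Φ * Φᵀ).det := by ring
    rw [h2, hdetU2, one_mul]
  -- the block matrix argument
  have hEQ' : ∀ mx kx : Fin n, (∑ l, Q l kx * e mx l) = if mx = kx then 1 else 0 := by
    intro mx kx; rw [← hEQ mx kx]; exact Finset.sum_congr rfl fun l _ => mul_comm _ _
  set Nb : Matrix (Fin r ⊕ Fin (n - r)) (Fin n) ℤ :=
    Matrix.of (Sum.elim (fun i => (e (femb i) : Fin n → ℤ)) φ) with hNbdef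
  have hNGram : Nb * Nbᵀ = Matrix.fromBlocks (Ef * Efᵀ) 0 0 (Φ * Φᵀ) := by
    ext s s'
    cases s with
    | inl i =>
      cases s' with
      | inl i' =>
        simp [Matrix.mul_apply, hNbdef, hEfdef]
      | inr k =>
        simp only [Matrix.mul_apply, Matrix.transpose_apply, hNbdef, Matrix.of_apply,
          Sum.elim_inl, Sum.elim_inr, Matrix.fromBlocks_apply₁₂, Matrix.zero_apply, hφdef]
        rw [hEQ, if_neg (hft i k)]
    | inr k =>
      cases s' with
      | inl i' =>
        simp only [Matrix.mul_apply, Matrix.transpose_apply, hNbdef, Matrix.of_apply,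
          Sum.elim_inl, Sum.elim_inr, Matrix.fromBlocks_apply₂₁, Matrix.zero_apply, hφdef]
        rw [hEQ', if_neg (hft i' k)]
      | inr k' =>
        simp [Matrix.mul_apply, hNbdef, hΦdef]
  have hdetblocks : (Nb * Nbᵀ).det = (Ef * Efᵀ).det * (Φ * Φᵀ).det := by
    rw [hNGram, Matrix.det_fromBlocks_zero₁₂]
  set Nsq : Matrix (Fin r ⊕ Fin (n - r)) (Fin r ⊕ Fin (n - r)) ℤ :=
    Nb.submatrix id ⇑σ with hNsqdef
  have hNbNsq : (Nb * Nbᵀ).det = Nsq.det ^ 2 := by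
    have h1 : Nb * Nbᵀ = Nsq * Nsqᵀ := by
      ext s s'
      simp only [Matrix.mul_apply, Matrix.submatrix_apply, Matrix.transpose_apply, hNsqdef,
        id_eq]
      exact (Fintype.sum_equiv σ _ _ fun u => rfl).symm
    rw [h1, Matrix.det_mul, Matrix.det_transpose, sq]
  have hNW : Nsq.det * W.det = (Ef * Efᵀ).det := by
    have hT : Nsq * (Wᵀ.submatrix ⇑σ ⇑σ) = Matrix.fromBlocks (Ef * Efᵀ)
        (Matrix.of fun i k => ∑ l, e (femb i) l * e (t k) l) 0 1 := by
      ext s s'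
      have hent : (Nsq * (Wᵀ.submatrix ⇑σ ⇑σ)) s s' = ∑ l, Nb s l * W (σ s') l := by
        simp only [Matrix.mul_apply, Matrix.submatrix_apply, Matrix.transpose_apply, hNsqdef,
          id_eq]
        exact Fintype.sum_equiv σ _ _ fun u => rfl
      rw [hent]
      cases s with
      | inl i =>
        cases s' with
        | inl i' =>
          simp [hNbdef, hWdef, hEfdef, Matrix.mul_apply, hσl]
        | inr k =>
          simp [hNbdef, hWdef, hσl, htdef]
      | inr k =>
        cases s' with
        | inl i' =>
          simp only [hNbdef, hWdef, Matrix.of_apply, Sum.elim_inr, hφdef,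
            Matrix.fromBlocks_apply₂₁, Matrix.zero_apply, hσl]
          rw [hEQ', if_neg (hft i' k)]
        | inr k' =>
          simp only [hNbdef, hWdef, Matrix.of_apply, Sum.elim_inr, hφdef,
            Matrix.fromBlocks_apply₂₂]
          rw [show σ (Sum.inr k') = t k' from rfl, hEQ']
          simp [Matrix.one_apply, htinj.eq_iff, eq_comm]
    have h2 : (Nsq * (Wᵀ.submatrix ⇑σ ⇑σ)).det = Nsq.det * W.det := by
      rw [Matrix.det_mul, Matrix.det_submatrix_equiv_self, Matrix.det_transpose]
    rw [← h2, hT, Matrix.det_fromBlocks_zero₂₁, Matrix.det_one, mul_one]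
  -- nondegeneracy
  have hGBne : (B * Bᵀ).det ≠ 0 := by
    intro h0
    set Br : Matrix (Fin r) (Fin n) ℝ := B.map ⇑(Int.castRingHom ℝ) with hBrdef
    have hr0 : (Br * Brᵀ).det = 0 := by
      have h1 : Br * Brᵀ = ((B * Bᵀ).map ⇑(Int.castRingHom ℝ)) := by
        rw [Matrix.map_mul, Matrix.transpose_map, hBrdef]
      have h2 := RingHom.map_det (Int.castRingHom ℝ) (B * Bᵀ)
      rw [RingHom.mapMatrix_apply] at h2
      rw [h1, ← h2, h0, map_zero]
    obtain ⟨v, hv, hv0⟩ := (Matrix.exists_mulVec_eq_zero_iff).2 hr0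
    set w : Fin n → ℝ := Brᵀ.mulVec v with hwdef
    have hww : w ⬝ᵥ w = 0 := by
      have h1 : w ⬝ᵥ w = v ⬝ᵥ (Br * Brᵀ).mulVec v :=
        calc w ⬝ᵥ w = (v ᵥ* Br) ⬝ᵥ (Brᵀ *ᵥ v) := by rw [hwdef, Matrix.mulVec_transpose]
          _ = v ⬝ᵥ (Br *ᵥ (Brᵀ *ᵥ v)) := (Matrix.dotProduct_mulVec v Br _).symm
          _ = v ⬝ᵥ (Br * Brᵀ).mulVec v := by rw [Matrix.mulVec_mulVec]
      rw [h1, hv0, dotProduct_zero]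
    have hww' : ∑ l, w l * w l = 0 := hww
    have hw0 : ∀ l, w l = 0 := by
      intro l
      have h1 := (Finset.sum_eq_zero_iff_of_nonneg
        (fun l _ => mul_self_nonneg (w l))).1 hww' l (Finset.mem_univ l)
      exact mul_self_eq_zero.mp h1
    apply hv
    funext i
    refine Fintype.linearIndependent_iff.1 hb v ?_ i
    funext j
    have h2 := hw0 j
    simp only [hwdef, Matrix.mulVec, dotProduct, Matrix.transpose_apply, hBrdef,
      Matrix.map_apply, hBdef, Matrix.of_apply] at h2
    simpa [Finset.sum_apply, mul_comm] using h2
  have hdEne : (Ef * Efᵀ).det ≠ 0 := by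
    intro h0
    exact hGBne (by rw [hGB, h0, mul_zero])
  have hΦE : (Φ * Φᵀ).det = (Ef * Efᵀ).det := by
    have h1 : (Ef * Efᵀ).det * (Φ * Φᵀ).det = (Ef * Efᵀ).det * (Ef * Efᵀ).det := by
      have h2 : (Nsq.det * W.det) ^ 2 = (Ef * Efᵀ).det ^ 2 := by rw [hNW]
      have h3 : Nsq.det ^ 2 = (Ef * Efᵀ).det ^ 2 := by
        nlinarith [hdetW2, h2]
      rw [← hdetblocks, hNbNsq, h3]; ring
    exact mul_left_cancel₀ hdEne h1
  -- final assembly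
  have hmain : (B * Bᵀ).det = G ^ 2 * (C * Cᵀ).det := by
    rw [hGC, hΦE, hGB, hG2]
  have hGne : G ≠ 0 := by
    intro h0
    have h1 : (∏ i, a i) ^ 2 = 0 := by rw [← hG2, h0]; ring
    obtain ⟨i, _, h3⟩ := Finset.prod_eq_zero_iff.1 (pow_eq_zero_iff two_ne_zero |>.1 h1)
    exact ha i h3
  have hGnonneg : (0 : ℤ) ≤ G := by
    rw [hGval, ← Int.abs_eq_normalize]; exact abs_nonneg _
  have hcastC : (Matrix.of fun i j : Fin (n - r) => ((∑ l, c i l * c j l : ℤ) : ℝ)).det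
      = (((C * Cᵀ).det : ℤ) : ℝ) := by
    have h1 : (Matrix.of fun i j : Fin (n - r) => ((∑ l, c i l * c j l : ℤ) : ℝ))
        = (C * Cᵀ).map ⇑(Int.castRingHom ℝ) := by
      ext i j
      simp [Matrix.mul_apply, hCdef]
    have h2 := RingHom.map_det (Int.castRingHom ℝ) (C * Cᵀ)
    rw [RingHom.mapMatrix_apply] at h2
    rw [h1, ← h2]
    rfl
  have hcastB : (Matrix.of fun i j : Fin r => ((∑ l, b i l * b j l : ℤ) : ℝ)).det
      = (((B * Bᵀ).det : ℤ) : ℝ) := by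
    have h1 : (Matrix.of fun i j : Fin r => ((∑ l, b i l * b j l : ℤ) : ℝ))
        = (B * Bᵀ).map ⇑(Int.castRingHom ℝ) := by
      ext i j
      simp [Matrix.mul_apply, hBdef]
    have h2 := RingHom.map_det (Int.castRingHom ℝ) (B * Bᵀ)
    rw [RingHom.mapMatrix_apply] at h2
    rw [h1, ← h2]
    rfl
  rw [hcastC, hcastB, hmain]
  have hGR : ((0:ℝ) ≤ (G:ℝ)) := by exact_mod_cast hGnonneg
  have hGRne : ((G:ℝ) ≠ 0) := by exact_mod_cast hGne
  rw [show (((G ^ 2 * (C * Cᵀ).det : ℤ)) : ℝ) = ((G:ℝ))^2 * (((C * Cᵀ).det : ℤ) : ℝ) by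
    push_cast; ring]
  rw [Real.sqrt_mul (by positivity) _, Real.sqrt_sq hGR]
  rw [mul_div_cancel_left₀ _ hGRne]
end

section
/- Let s ≥ 2, let C ≥ 1 and δ > 0 be real, and for a coefficient vector a ∈ (ℤ∖{0})^s let 𝒫(a) be the set of primes p such that p ≤ C or p divides at least two of a_1,…,a_s, and set P(a) = ∏_{p ∈ 𝒫(a)} p. Then for every ε > 0, the number of a with 0 < |a_j| ≤ A for all j and P(a) > A^δ is ≪ A^(s−δ+ε), with implied constant depending only on s, C, δ, ε. -/
/-- The set `𝒫(a)` of primes `p` with `p ≤ C` or `p` dividing at least two of the `a_j`. -/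
def Pset (s : ℕ) (C : ℝ) (a : Fin s → ℤ) : Set ℕ :=
  {p : ℕ | p.Prime ∧ ((p : ℝ) ≤ C ∨ ∃ i j : Fin s, i ≠ j ∧ (p : ℤ) ∣ a i ∧ (p : ℤ) ∣ a j)}

/-- `P(a) = ∏_{p ∈ 𝒫(a)} p` (a finite product when all `a_j ≠ 0`). -/
noncomputable def Pprod (s : ℕ) (C : ℝ) (a : Fin s → ℤ) : ℕ :=
  ∏ᶠ p ∈ Pset s C a, p

namespace LPR

lemma natAbs_le_floor {A : ℝ} {x : ℤ} (hx : |(x : ℝ)| ≤ A) : x.natAbs ≤ ⌊A⌋₊ := by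
  refine Nat.le_floor ?_
  rw [Nat.cast_natAbs, Int.cast_abs]
  exact hx

lemma pset_finite (s : ℕ) (C : ℝ) (a : Fin s → ℤ) (ha : ∀ j, a j ≠ 0) :
    (Pset s C a).Finite := by
  apply Set.Finite.subset
    (Set.finite_Iic (max ⌈C⌉₊ (Finset.univ.sup fun i => (a i).natAbs)))
  rintro p ⟨hp, h | ⟨i, j, hij, hdi, hdj⟩⟩ <;> simp only [Set.mem_Iic, le_max_iff]
  · refine Or.inl ?_
    have : (p : ℝ) ≤ (⌈C⌉₊ : ℝ) := h.trans (Nat.le_ceil C)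
    exact_mod_cast this
  · refine Or.inr (le_trans ?_ (Finset.le_sup (Finset.mem_univ i)))
    have hd : p ∣ (a i).natAbs := by
      have := Int.natAbs_dvd_natAbs.mpr hdi
      simpa using this
    exact Nat.le_of_dvd (Int.natAbs_pos.mpr (ha i)) hd

lemma card_mult (Mn D : ℕ) (hD : 0 < D) :
    (((Finset.Icc (-(Mn : ℤ)) (Mn : ℤ))).filter (fun x => x ≠ 0 ∧ (D : ℤ) ∣ x)).card
      ≤ 2 * (Mn / D) := by
  classical
  set k : ℕ := Mn / D with hk
  clear_value k
  have hmain : (((Finset.Icc (-(Mn : ℤ)) (Mn : ℤ))).filter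
      (fun x => x ≠ 0 ∧ (D : ℤ) ∣ x)).card ≤ ((Finset.Icc (-(k : ℤ)) (k : ℤ)).erase 0).card := by
    refine Finset.card_le_card_of_injOn (fun x => x / D) ?_ ?_
    · intro x hx
      simp only [Finset.mem_coe, Finset.mem_filter, Finset.mem_Icc] at hx
      obtain ⟨⟨hx1, hx2⟩, hx0, hxd⟩ := hx
      have hxe : (D : ℤ) * (x / D) = x := Int.mul_ediv_cancel' hxd
      have hy0 : x / (D : ℤ) ≠ 0 := by
        intro h0; rw [h0, mul_zero] at hxe; exact hx0 hxe.symm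
      have h2 : D * (x / (D : ℤ)).natAbs = x.natAbs := by
        have h := congrArg Int.natAbs hxe
        rwa [Int.natAbs_mul, Int.natAbs_natCast] at h
      have hyabs : (x / (D : ℤ)).natAbs ≤ k := by
        rw [hk, Nat.le_div_iff_mul_le hD, mul_comm, h2]
        omega
      show x / (D : ℤ) ∈ _
      simp only [Finset.mem_coe, Finset.mem_erase, Finset.mem_Icc]
      refine ⟨hy0, ?_, ?_⟩ <;> omega
    · intro x hx y hy hxy
      simp only [Finset.coe_filter, Set.mem_setOf_eq] at hx hy
      have hxe : (D : ℤ) * (x / D) = x := Int.mul_ediv_cancel' hx.2.2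
      have hye : (D : ℤ) * (y / D) = y := Int.mul_ediv_cancel' hy.2.2
      simp only at hxy
      rw [← hxe, ← hye, hxy]
  have h0 : (0 : ℤ) ∈ Finset.Icc (-(k : ℤ)) (k : ℤ) := by
    simp only [Finset.mem_Icc]; omega
  have hcard : ((Finset.Icc (-(k : ℤ)) (k : ℤ)).erase 0).card = 2 * k := by
    clear hmain hk
    rw [Finset.card_erase_of_mem h0, Int.card_Icc]
    omega
  exact hmain.trans (le_of_eq hcard)

lemma prod_primes_dvd_int (F : Finset ℕ) (hF : ∀ p ∈ F, p.Prime) (x : ℤ)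
    (h : ∀ p ∈ F, (p : ℤ) ∣ x) : ((∏ p ∈ F, p : ℕ) : ℤ) ∣ x := by
  have hnat : (∏ p ∈ F, p) ∣ x.natAbs := by
    refine Finset.prod_primes_dvd _ (fun p hp => (hF p hp).prime) (fun p hp => ?_)
    have := Int.natAbs_dvd_natAbs.mpr (h p hp)
    simpa using this
  exact dvd_trans (Int.natCast_dvd_natCast.mpr hnat) (Int.natAbs_dvd.mpr dvd_rfl)

end LPR

open Finset in
/-- Product of primes up to `C`. -/
noncomputable def smallP (C : ℝ) : Finset ℕ := (Finset.Iic ⌈C⌉₊).filter Nat.Prime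

open Finset in
def Dfun (s : ℕ) (d : Fin s × Fin s → ℕ) (i : Fin s) : ℕ :=
  ∏ q ∈ Finset.univ.filter (fun q : Fin s × Fin s => q.1 = i ∨ q.2 = i), d q

namespace LPR
open Finset

lemma Dfun_pos {s : ℕ} {d : Fin s × Fin s → ℕ} (hd : ∀ q, 1 ≤ d q) (i : Fin s) :
    0 < Dfun s d i :=
  Finset.prod_pos (fun q _ => hd q)

lemma prod_Dfun (s : ℕ) (d : Fin s × Fin s → ℕ)
    (hdiag : ∀ q : Fin s × Fin s, ¬ q.1 < q.2 → d q = 1) :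
    ∏ i, Dfun s d i = (∏ q, d q) ^ 2 := by
  classical
  unfold Dfun
  rw [Finset.prod_comm' (s := Finset.univ) (t := fun i => Finset.univ.filter
      (fun q : Fin s × Fin s => q.1 = i ∨ q.2 = i)) (t' := Finset.univ)
      (s' := fun q => Finset.univ.filter (fun i => q.1 = i ∨ q.2 = i))
      (by intro i q; simp [Finset.mem_filter])]
  rw [← Finset.prod_pow]
  refine Finset.prod_congr rfl (fun q _ => ?_)
  rw [Finset.prod_const]
  by_cases hq : q.1 < q.2
  · have hfil : Finset.univ.filter (fun i => q.1 = i ∨ q.2 = i) = {q.1, q.2} := by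
      ext i
      simp [Finset.mem_filter, Finset.mem_insert, eq_comm]
    rw [hfil, Finset.card_pair (ne_of_lt hq)]
  · rw [hdiag q hq, one_pow, one_pow]

lemma Pprod_le (s : ℕ) (C : ℝ) (a : Fin s → ℤ) (hfin : (Pset s C a).Finite) (F : Finset ℕ)
    (hsub : ∀ p ∈ hfin.toFinset, p ∈ smallP C ∪ F) (hF1 : ∀ p ∈ F, 1 ≤ p) :
    Pprod s C a ≤ (∏ p ∈ smallP C, p) * ∏ p ∈ F, p := by
  classical
  have h1 : Pprod s C a = ∏ p ∈ hfin.toFinset, p :=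
    finprod_mem_eq_finite_toFinset_prod _ hfin
  rw [h1]
  have hsmall1 : ∀ p ∈ smallP C ∪ F, 1 ≤ p := by
    intro p hp
    rcases Finset.mem_union.mp hp with h | h
    · exact (Finset.mem_filter.mp h).2.pos
    · exact hF1 p h
  calc ∏ p ∈ hfin.toFinset, p ≤ ∏ p ∈ smallP C ∪ F, p :=
      Finset.prod_le_prod_of_subset_of_one_le' hsub (fun p hp _ => hsmall1 p hp)
    _ = (∏ p ∈ smallP C, p) * ∏ p ∈ F \ smallP C, p := by
        rw [← Finset.prod_union Finset.disjoint_sdiff]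
        congr 1
        exact (Finset.union_sdiff_self_eq_union).symm
    _ ≤ (∏ p ∈ smallP C, p) * ∏ p ∈ F, p :=
      Nat.mul_le_mul_left _ (Finset.prod_le_prod_of_subset_of_one_le'
        Finset.sdiff_subset (fun p hp _ => hF1 p hp))

lemma count_le (s : ℕ) (M : ℕ) (D : Fin s → ℕ) (hD : ∀ i, 0 < D i) :
    ((Fintype.piFinset (fun _ : Fin s => Finset.Icc (-(M : ℤ)) (M : ℤ))).filter
      (fun a => (∀ j, a j ≠ 0) ∧ ∀ i, ((D i : ℕ) : ℤ) ∣ a i)).card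
      ≤ ∏ i, (2 * (M / D i)) := by
  classical
  have hsub : ((Fintype.piFinset (fun _ : Fin s => Finset.Icc (-(M : ℤ)) (M : ℤ))).filter
      (fun a => (∀ j, a j ≠ 0) ∧ ∀ i, ((D i : ℕ) : ℤ) ∣ a i))
      ⊆ Fintype.piFinset (fun i => (Finset.Icc (-(M : ℤ)) (M : ℤ)).filter
          (fun x => x ≠ 0 ∧ (D i : ℤ) ∣ x)) := by
    intro a haa
    simp only [Finset.mem_filter, Fintype.mem_piFinset] at haa ⊢
    intro i
    exact ⟨haa.1 i, haa.2.1 i, haa.2.2 i⟩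
  refine (Finset.card_le_card hsub).trans ?_
  rw [Fintype.card_piFinset]
  exact Finset.prod_le_prod' (fun i _ => card_mult M (D i) (hD i))

lemma rankin {x T θ : ℝ} (hx : 1 ≤ x) (hT : 0 < T) (hTx : T < x) (hθ0 : 0 < θ)
    (hθ1 : θ ≤ 2⁻¹) : ((x ^ 2)⁻¹ : ℝ) ≤ T ^ (-(1 - θ)) * x ^ (-(1 + θ)) := by
  have hx0 : (0 : ℝ) < x := lt_of_lt_of_le one_pos hx
  have h1 : ((x ^ 2)⁻¹ : ℝ) = x ^ (-(1 - θ)) * x ^ (-(1 + θ)) := by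
    rw [← Real.rpow_add hx0, show (-(1 - θ) + -(1 + θ)) = -(2 : ℝ) by ring,
      Real.rpow_neg hx0.le, ← Real.rpow_natCast x 2]
    norm_num
  rw [h1]
  refine mul_le_mul_of_nonneg_right ?_ (Real.rpow_nonneg hx0.le _)
  rw [Real.rpow_neg hx0.le, Real.rpow_neg hT.le]
  exact inv_anti₀ (Real.rpow_pos_of_pos hT _)
    (Real.rpow_le_rpow hT.le hTx.le (by linarith))

end LPR

namespace LPR
open Finset

lemma cover (s : ℕ) (hs : 2 ≤ s) (C : ℝ) (A : ℝ) (hA : 1 ≤ A) (a : Fin s → ℤ)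
    (ha0 : ∀ j, a j ≠ 0) (haA : ∀ j, |((a j : ℤ) : ℝ)| ≤ A) :
    ∃ d : Fin s × Fin s → ℕ,
      (∀ q, 1 ≤ d q) ∧ (∀ q, d q ≤ ⌊A⌋₊) ∧
      (∀ q : Fin s × Fin s, ¬ q.1 < q.2 → d q = 1) ∧
      (Pprod s C a ≤ (∏ p ∈ smallP C, p) * ∏ q, d q) ∧
      (∀ i, ((Dfun s d i : ℕ) : ℤ) ∣ a i) := by
  classical
  have hfin := pset_finite s C a ha0
  have hmfin : {p : ℕ | p.Prime ∧ ∃ i j : Fin s, i ≠ j ∧ (p : ℤ) ∣ a i ∧ (p : ℤ) ∣ a j}.Finite :=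
    hfin.subset (fun p hp => ⟨hp.1, Or.inr hp.2⟩)
  set F : Finset ℕ := hmfin.toFinset with hFdef
  have hFmem : ∀ p : ℕ, p ∈ F ↔
      (p.Prime ∧ ∃ i j : Fin s, i ≠ j ∧ (p : ℤ) ∣ a i ∧ (p : ℤ) ∣ a j) :=
    fun p => hmfin.mem_toFinset
  have hchoice : ∀ p : ℕ, ∃ q : Fin s × Fin s,
      q.1 < q.2 ∧ (p ∈ F → ((p : ℤ) ∣ a q.1 ∧ (p : ℤ) ∣ a q.2)) := by
    intro p
    by_cases hp : p ∈ F
    · obtain ⟨-, i, j, hij, h1, h2⟩ := (hFmem p).mp hp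
      rcases lt_or_gt_of_ne hij with h | h
      · exact ⟨(i, j), h, fun _ => ⟨h1, h2⟩⟩
      · exact ⟨(j, i), h, fun _ => ⟨h2, h1⟩⟩
    · refine ⟨(⟨0, by omega⟩, ⟨1, by omega⟩), ?_, fun h => absurd h hp⟩
      simp [Fin.lt_def]
  choose c hc1 hc2 using hchoice
  have hprime : ∀ q : Fin s × Fin s, ∀ p ∈ F.filter (fun p => c p = q), p.Prime :=
    fun q p hp => ((hFmem p).mp (Finset.mem_filter.mp hp).1).1
  refine ⟨fun q => ∏ p ∈ F.filter (fun p => c p = q), p, ?_, ?_, ?_, ?_, ?_⟩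
  · intro q
    exact Finset.one_le_prod' (fun p hp => (hprime q p hp).pos)
  · intro q
    have hdvd : (∏ p ∈ F.filter (fun p => c p = q), p) ∣ (a q.1).natAbs := by
      refine Finset.prod_primes_dvd _ (fun p hp => (hprime q p hp).prime) (fun p hp => ?_)
      obtain ⟨hpF, hpc⟩ := Finset.mem_filter.mp hp
      have := (hc2 p hpF).1
      rw [hpc] at this
      have h2 := Int.natAbs_dvd_natAbs.mpr this
      simpa using h2
    refine le_trans (Nat.le_of_dvd (Int.natAbs_pos.mpr (ha0 q.1)) hdvd) ?_
    exact natAbs_le_floor (haA q.1)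
  · intro q hq
    have hfil : F.filter (fun p => c p = q) = ∅ := by
      refine Finset.filter_false_of_mem (fun p hp hcp => ?_)
      exact hq (hcp ▸ hc1 p)
    show ∏ p ∈ F.filter (fun p => c p = q), p = 1
    rw [hfil, Finset.prod_empty]
  · have hgroup : ∏ q, ∏ p ∈ F.filter (fun p => c p = q), p = ∏ p ∈ F, p := by
      exact Finset.prod_fiberwise F c id
    rw [hgroup]
    refine Pprod_le s C a hfin F ?_ (fun p hp => ((hFmem p).mp hp).1.pos)
    intro p hp
    have hpPset : p ∈ Pset s C a := hfin.mem_toFinset.mp hp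
    obtain ⟨hprime', h | h⟩ := hpPset
    · refine Finset.mem_union_left _ ?_
      refine Finset.mem_filter.mpr ⟨Finset.mem_Iic.mpr ?_, hprime'⟩
      have : (p : ℝ) ≤ (⌈C⌉₊ : ℝ) := h.trans (Nat.le_ceil C)
      exact_mod_cast this
    · exact Finset.mem_union_right _ ((hFmem p).mpr ⟨hprime', h⟩)
  · intro i
    have hre : Dfun s (fun q => ∏ p ∈ F.filter (fun p => c p = q), p) i
        = ∏ p ∈ F.filter (fun p => (c p).1 = i ∨ (c p).2 = i), p := by
      unfold Dfun
      rw [← Finset.prod_biUnion ?hdisj]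
      case hdisj =>
        intro q1 _ q2 _ hne
        refine Finset.disjoint_left.mpr (fun p hp1 hp2 => ?_)
        exact hne ((Finset.mem_filter.mp hp1).2 ▸ (Finset.mem_filter.mp hp2).2.symm ▸ rfl)
      congr 1
      ext p
      simp only [Finset.mem_biUnion, Finset.mem_filter, Finset.mem_univ, true_and]
      constructor
      · rintro ⟨q, hq, hpF, hcq⟩
        exact ⟨hpF, by rw [hcq]; exact hq⟩
      · rintro ⟨hpF, hci⟩
        exact ⟨c p, hci, hpF, rfl⟩
    rw [hre]
    refine prod_primes_dvd_int _ (fun p hp => ((hFmem p).mp (Finset.mem_filter.mp hp).1).1) _ ?_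
    intro p hp
    obtain ⟨hpF, hci⟩ := Finset.mem_filter.mp hp
    rcases hci with h | h
    · exact h ▸ (hc2 p hpF).1
    · exact h ▸ (hc2 p hpF).2

end LPR

set_option maxHeartbeats 1000000 in
open Finset in
/-- The vectors `a` with `0 < |a_j| ≤ A` and `P(a) > A^δ` number `≪ A^(s-δ+ε)`. -/
theorem large_Pprod_rare (s : ℕ) (hs : 2 ≤ s) (C : ℝ) (hC : 1 ≤ C)
    (δ : ℝ) (hδ : 0 < δ) (ε : ℝ) (hε : 0 < ε) :
    ∃ K : ℝ, 0 < K ∧ ∀ A : ℝ, 1 ≤ A →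
      (Set.ncard {a : Fin s → ℤ | (∀ j, a j ≠ 0 ∧ (|a j| : ℝ) ≤ A) ∧
          A ^ δ < (Pprod s C a : ℝ)} : ℝ)
        ≤ K * A ^ ((s : ℝ) - δ + ε) := by
  classical
  set θ : ℝ := min (ε / δ) 2⁻¹ with hθdef
  have hθ0 : 0 < θ := lt_min (div_pos hε hδ) (by norm_num)
  have hθhalf : θ ≤ 2⁻¹ := min_le_right _ _
  have hθε : δ * θ ≤ ε := by
    have h1 : θ ≤ ε / δ := min_le_left _ _
    calc δ * θ ≤ δ * (ε / δ) := by nlinarith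
      _ = ε := by field_simp
  set B : ℕ := ∏ p ∈ smallP C, p with hBdef
  have hB1 : 1 ≤ B := Finset.one_le_prod' (fun p hp => (Finset.mem_filter.mp hp).2.pos)
  have hB0R : (0 : ℝ) < B := by exact_mod_cast Nat.lt_of_lt_of_le Nat.zero_lt_one hB1
  set Z : ℝ := ∑' n : ℕ, (n : ℝ) ^ (-(1 + θ)) with hZdef
  have hZsum : Summable (fun n : ℕ => (n : ℝ) ^ (-(1 + θ))) :=
    Real.summable_nat_rpow.mpr (by linarith)
  have hZ0 : 0 ≤ Z := tsum_nonneg (fun n => Real.rpow_nonneg (Nat.cast_nonneg n) _)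
  set C0 : ℝ := 2 ^ s * Z ^ (s * s) * (B : ℝ) ^ (1 - θ) with hC0def
  have hC00 : 0 ≤ C0 := mul_nonneg (mul_nonneg (by positivity) (pow_nonneg hZ0 _))
    (Real.rpow_nonneg (Nat.cast_nonneg B) _)
  refine ⟨C0 + 1, by linarith, ?_⟩
  intro A hA
  have hA0 : (0 : ℝ) < A := lt_of_lt_of_le one_pos hA
  set M : ℕ := ⌊A⌋₊ with hMdef
  have hM1 : 1 ≤ M := Nat.le_floor (by exact_mod_cast hA)
  have hMA : (M : ℝ) ≤ A := Nat.floor_le hA0.le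
  set T : ℝ := A ^ δ / B with hTdef
  have hT0 : 0 < T := div_pos (Real.rpow_pos_of_pos hA0 δ) hB0R
  set box : Finset (Fin s → ℤ) :=
    Fintype.piFinset (fun _ : Fin s => Finset.Icc (-(M : ℤ)) (M : ℤ)) with hboxdef
  set S' : Finset (Fin s → ℤ) := box.filter
    (fun a => (∀ j, a j ≠ 0 ∧ |((a j : ℤ) : ℝ)| ≤ A) ∧ A ^ δ < ((Pprod s C a : ℕ) : ℝ))
    with hS'def
  have hset : {a : Fin s → ℤ | (∀ j, a j ≠ 0 ∧ (|a j| : ℝ) ≤ A) ∧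
      A ^ δ < (Pprod s C a : ℝ)} = ↑S' := by
    ext a
    rw [hS'def]
    simp only [Set.mem_setOf_eq, Finset.coe_filter, Finset.mem_coe, Finset.mem_filter,
      Fintype.mem_piFinset, Finset.mem_Icc, hboxdef]
    constructor
    · intro h
      refine ⟨fun j => ?_, h⟩
      have h1 := (h.1 j).2
      have h2 := LPR.natAbs_le_floor h1
      rw [← hMdef] at h2
      omega
    · exact fun h => h.2
  rw [hset, Set.ncard_coe_finset]
  set 𝒟 : Finset (Fin s × Fin s → ℕ) :=
    (Fintype.piFinset (fun _ : Fin s × Fin s => Finset.Icc 1 M)).filter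
      (fun d => (T < ((∏ q, d q : ℕ) : ℝ)) ∧ ∀ q : Fin s × Fin s, ¬ q.1 < q.2 → d q = 1)
    with h𝒟def
  -- covering
  have hcover : ∀ a ∈ S', ∃ d ∈ 𝒟, ∀ i, ((Dfun s d i : ℕ) : ℤ) ∣ a i := by
    intro a haS
    rw [hS'def, Finset.mem_filter] at haS
    obtain ⟨habox, hcond, hPp⟩ := haS
    obtain ⟨d, hd1, hdM, hdiag, hPle, hdvd⟩ :=
      LPR.cover s hs C A hA a (fun j => (hcond j).1) (fun j => (hcond j).2)
    refine ⟨d, ?_, hdvd⟩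
    rw [h𝒟def, Finset.mem_filter]
    refine ⟨Fintype.mem_piFinset.mpr (fun q => Finset.mem_Icc.mpr ⟨hd1 q, hdM q⟩), ?_, hdiag⟩
    have hcast : ((Pprod s C a : ℕ) : ℝ) ≤ (B : ℝ) * ((∏ q, d q : ℕ) : ℝ) := by
      rw [hBdef]
      exact_mod_cast hPle
    have h3 : A ^ δ < (B : ℝ) * ((∏ q, d q : ℕ) : ℝ) := lt_of_lt_of_le hPp hcast
    rw [hTdef, div_lt_iff₀ hB0R]
    linarith [h3]
  have hsubU : S' ⊆ 𝒟.biUnion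
      (fun d => S'.filter (fun a => ∀ i, ((Dfun s d i : ℕ) : ℤ) ∣ a i)) := by
    intro a haS
    obtain ⟨d, hd, hdvd⟩ := hcover a haS
    exact Finset.mem_biUnion.mpr ⟨d, hd, Finset.mem_filter.mpr ⟨haS, hdvd⟩⟩
  have hcard1 : (S'.card : ℝ) ≤ ∑ d ∈ 𝒟,
      ((S'.filter (fun a => ∀ i, ((Dfun s d i : ℕ) : ℤ) ∣ a i)).card : ℝ) := by
    have h := (Finset.card_le_card hsubU).trans Finset.card_biUnion_le
    exact_mod_cast h
  -- per-d bound
  have hperd : ∀ d ∈ 𝒟, ((S'.filter (fun a => ∀ i, ((Dfun s d i : ℕ) : ℤ) ∣ a i)).card : ℝ)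
      ≤ (2 * A) ^ s * T ^ (-(1 - θ)) * ∏ q, (d q : ℝ) ^ (-(1 + θ)) := by
    intro d hd
    rw [h𝒟def, Finset.mem_filter] at hd
    obtain ⟨hdbox, hdT, hdiag⟩ := hd
    have hd1 : ∀ q, 1 ≤ d q := fun q => (Finset.mem_Icc.mp (Fintype.mem_piFinset.mp hdbox q)).1
    have hD1 : ∀ i, 0 < Dfun s d i := LPR.Dfun_pos hd1
    have hsub2 : S'.filter (fun a => ∀ i, ((Dfun s d i : ℕ) : ℤ) ∣ a i)
        ⊆ box.filter (fun a => (∀ j, a j ≠ 0) ∧ ∀ i, ((Dfun s d i : ℕ) : ℤ) ∣ a i) := by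
      intro a haa
      rw [Finset.mem_filter] at haa
      obtain ⟨haS, hdvd⟩ := haa
      rw [hS'def, Finset.mem_filter] at haS
      exact Finset.mem_filter.mpr ⟨haS.1, fun j => (haS.2.1 j).1, hdvd⟩
    have hc1 : (S'.filter (fun a => ∀ i, ((Dfun s d i : ℕ) : ℤ) ∣ a i)).card
        ≤ ∏ i, (2 * (M / Dfun s d i)) :=
      (Finset.card_le_card hsub2).trans (LPR.count_le s M _ hD1)
    have hc2 : ((∏ i, (2 * (M / Dfun s d i)) : ℕ) : ℝ)
        ≤ ∏ i : Fin s, (2 * A / (Dfun s d i : ℝ)) := by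
      push_cast
      refine Finset.prod_le_prod (fun i _ => by positivity) (fun i _ => ?_)
      have hDpos : (0 : ℝ) < (Dfun s d i : ℝ) := by exact_mod_cast hD1 i
      have h1 : ((M / Dfun s d i : ℕ) : ℝ) ≤ (M : ℝ) / (Dfun s d i : ℝ) := Nat.cast_div_le
      calc (2 : ℝ) * ((M / Dfun s d i : ℕ) : ℝ) ≤ 2 * ((M : ℝ) / (Dfun s d i : ℝ)) := by
            linarith
        _ ≤ 2 * A / (Dfun s d i : ℝ) := by
            rw [mul_div_assoc]
            gcongr
    have hc3 : ∏ i : Fin s, (2 * A / (Dfun s d i : ℝ))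
        = (2 * A) ^ s * (((∏ q, d q : ℕ) : ℝ) ^ 2)⁻¹ := by
      rw [Finset.prod_div_distrib, Finset.prod_const, Finset.card_univ, Fintype.card_fin,
        div_eq_mul_inv]
      congr 1
      rw [← Nat.cast_prod, LPR.prod_Dfun s d hdiag]
      push_cast
      ring
    have hx1 : (1 : ℝ) ≤ ((∏ q, d q : ℕ) : ℝ) := by
      exact_mod_cast Finset.one_le_prod' (fun q (_ : q ∈ Finset.univ) => hd1 q)
    have hrk := LPR.rankin hx1 hT0 hdT hθ0 hθhalf
    have hc4 : ((∏ q, d q : ℕ) : ℝ) ^ (-(1 + θ)) = ∏ q, (d q : ℝ) ^ (-(1 + θ)) := by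
      rw [Nat.cast_prod]
      exact (Real.finset_prod_rpow _ _ (fun q _ => Nat.cast_nonneg _) _).symm
    calc ((S'.filter (fun a => ∀ i, ((Dfun s d i : ℕ) : ℤ) ∣ a i)).card : ℝ)
        ≤ ((∏ i, (2 * (M / Dfun s d i)) : ℕ) : ℝ) := by exact_mod_cast hc1
      _ ≤ ∏ i : Fin s, (2 * A / (Dfun s d i : ℝ)) := hc2
      _ = (2 * A) ^ s * (((∏ q, d q : ℕ) : ℝ) ^ 2)⁻¹ := hc3
      _ ≤ (2 * A) ^ s * (T ^ (-(1 - θ)) * ((∏ q, d q : ℕ) : ℝ) ^ (-(1 + θ))) :=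
          mul_le_mul_of_nonneg_left hrk (by positivity)
      _ = (2 * A) ^ s * T ^ (-(1 - θ)) * ∏ q, (d q : ℝ) ^ (-(1 + θ)) := by
          rw [hc4]; ring
  -- sum over d
  have hsum : ∑ d ∈ 𝒟, ∏ q, (d q : ℝ) ^ (-(1 + θ)) ≤ Z ^ (s * s) := by
    calc ∑ d ∈ 𝒟, ∏ q, (d q : ℝ) ^ (-(1 + θ))
        ≤ ∑ d ∈ Fintype.piFinset (fun _ : Fin s × Fin s => Finset.Icc 1 M),
            ∏ q, (d q : ℝ) ^ (-(1 + θ)) := by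
          refine Finset.sum_le_sum_of_subset_of_nonneg (fun d hd => ?_)
            (fun d _ _ => Finset.prod_nonneg (fun q _ => Real.rpow_nonneg (Nat.cast_nonneg _) _))
          rw [h𝒟def, Finset.mem_filter] at hd
          exact hd.1
      _ = ∏ q : Fin s × Fin s, ∑ n ∈ Finset.Icc 1 M, (n : ℝ) ^ (-(1 + θ)) :=
          (Finset.prod_univ_sum (fun _ : Fin s × Fin s => Finset.Icc 1 M)
            (fun _ n => (n : ℝ) ^ (-(1 + θ)))).symm
      _ ≤ ∏ q : Fin s × Fin s, Z := by
          refine Finset.prod_le_prod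
            (fun q _ => Finset.sum_nonneg (fun n _ => Real.rpow_nonneg (Nat.cast_nonneg _) _))
            (fun q _ => ?_)
          exact Summable.sum_le_tsum _ (fun n _ => Real.rpow_nonneg (Nat.cast_nonneg n) _) hZsum
      _ = Z ^ (s * s) := by
          rw [Finset.prod_const, Finset.card_univ, Fintype.card_prod, Fintype.card_fin]
  -- assemble
  have hTexp : T ^ (-(1 - θ)) = A ^ (δ * -(1 - θ)) * (B : ℝ) ^ (1 - θ) := by
    rw [hTdef, Real.div_rpow (Real.rpow_nonneg hA0.le δ) (Nat.cast_nonneg B),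
      Real.rpow_neg (Nat.cast_nonneg B), div_inv_eq_mul, ← Real.rpow_mul hA0.le]
  have hmain : (S'.card : ℝ) ≤ (2 * A) ^ s * T ^ (-(1 - θ)) * Z ^ (s * s) := by
    calc (S'.card : ℝ) ≤ ∑ d ∈ 𝒟,
        ((S'.filter (fun a => ∀ i, ((Dfun s d i : ℕ) : ℤ) ∣ a i)).card : ℝ) := hcard1
      _ ≤ ∑ d ∈ 𝒟, (2 * A) ^ s * T ^ (-(1 - θ)) * ∏ q, (d q : ℝ) ^ (-(1 + θ)) :=
          Finset.sum_le_sum hperd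
      _ = (2 * A) ^ s * T ^ (-(1 - θ)) * ∑ d ∈ 𝒟, ∏ q, (d q : ℝ) ^ (-(1 + θ)) := by
          rw [← Finset.mul_sum]
      _ ≤ (2 * A) ^ s * T ^ (-(1 - θ)) * Z ^ (s * s) := by
          refine mul_le_mul_of_nonneg_left hsum ?_
          have : (0 : ℝ) ≤ T ^ (-(1 - θ)) := Real.rpow_nonneg hT0.le _
          positivity
  refine hmain.trans ?_
  have e1 : (2 * A) ^ s * T ^ (-(1 - θ)) * Z ^ (s * s)
      = C0 * A ^ ((s : ℝ) + δ * -(1 - θ)) := by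
    rw [hTexp, mul_pow, ← Real.rpow_natCast A s, hC0def, Real.rpow_add hA0]
    ring
  rw [e1]
  have e2 : A ^ ((s : ℝ) + δ * -(1 - θ)) ≤ A ^ ((s : ℝ) - δ + ε) :=
    Real.rpow_le_rpow_of_exponent_le hA (by nlinarith)
  calc C0 * A ^ ((s : ℝ) + δ * -(1 - θ)) ≤ C0 * A ^ ((s : ℝ) - δ + ε) :=
      mul_le_mul_of_nonneg_left e2 hC00
    _ ≤ (C0 + 1) * A ^ ((s : ℝ) - δ + ε) := by
      have h3 : (0 : ℝ) ≤ A ^ ((s : ℝ) - δ + ε) := Real.rpow_nonneg hA0.le _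
      nlinarith
end

section
/- Let s ≥ 2, let C ≥ 1 and δ > 0 be real, and for a coefficient vector a ∈ (ℤ∖{0})^s let 𝒫(a) be the set of primes p such that p ≤ C or p divides at least two of a_1,…,a_s; set P(a) = ∏_{p ∈ 𝒫(a)} p and P†(a) = ∏_{p ∈ 𝒫(a)} p^(l(p)), where l(p) is the largest integer l such that p^l divides a_j for some j. Then for every ε > 0, the number of a with 0 < |a_j| ≤ A for all j, P(a) ≤ A^δ and P†(a) > A^(2δ) is ≪ A^(s−δ+ε), with implied constant depending only on s, C, δ, ε. -/
set_option maxHeartbeats 1000000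

/-- `l(p) = max{l : p^l ∣ a_j for some j}`, i.e. the largest exponent of `p` in any `a_j`. -/
noncomputable def lexp (s : ℕ) (a : Fin s → ℤ) (p : ℕ) : ℕ :=
  Finset.univ.sup fun j => (a j).natAbs.factorization p

/-- `P†(a) = ∏_{p ∈ 𝒫(a)} p^(l(p))`. -/
noncomputable def Pdagger (s : ℕ) (C : ℝ) (a : Fin s → ℤ) : ℕ :=
  ∏ᶠ p ∈ Pset s C a, p ^ lexp s a p

open Classical in
/-- A finite version of `Pset`. -/
noncomputable def Pfin (s : ℕ) (C : ℝ) (a : Fin s → ℤ) : Finset ℕ :=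
  @Finset.filter _ (fun p => p ∈ Pset s C a) (Classical.decPred _)
    (Finset.range (⌈C⌉₊ + 1) ∪ (∏ j, (a j).natAbs).primeFactors)

lemma Pfin_prime {s : ℕ} {C : ℝ} {a : Fin s → ℤ} {p : ℕ} (hp : p ∈ Pfin s C a) : p.Prime := by
  unfold Pfin at hp
  simp only [Finset.mem_filter] at hp
  exact (hp.2 : p ∈ Pset s C a).1

lemma coe_Pfin (s : ℕ) (C : ℝ) (a : Fin s → ℤ) (ha : ∀ j, a j ≠ 0) :
    ↑(Pfin s C a) = Pset s C a := by
  classical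
  ext p
  simp only [Pfin, Finset.coe_filter, Set.mem_setOf_eq, Finset.mem_union, Finset.mem_range]
  constructor
  · rintro ⟨-, h⟩; exact h
  · intro h
    refine ⟨?_, h⟩
    obtain ⟨hp, hC | ⟨i, j, hij, hi, hj⟩⟩ := h
    · left
      have h1 : (p:ℝ) ≤ (⌈C⌉₊ : ℝ) := le_trans hC (Nat.le_ceil C)
      have h2 : p ≤ ⌈C⌉₊ := by exact_mod_cast h1
      omega
    · right
      have h1 : p ∣ (a i).natAbs := Int.natCast_dvd.mp hi
      have h2 : p ∣ ∏ j, (a j).natAbs :=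
        h1.trans (Finset.dvd_prod_of_mem _ (Finset.mem_univ i))
      refine Nat.mem_primeFactors.mpr ⟨hp, h2, ?_⟩
      rw [Finset.prod_ne_zero_iff]
      exact fun j _ => Int.natAbs_ne_zero.mpr (ha j)

lemma Pprod_eq {s : ℕ} {C : ℝ} {a : Fin s → ℤ} (ha : ∀ j, a j ≠ 0) :
    Pprod s C a = ∏ p ∈ Pfin s C a, p := by
  rw [Pprod, ← coe_Pfin s C a ha, finprod_mem_coe_finset]

lemma Pdagger_eq {s : ℕ} {C : ℝ} {a : Fin s → ℤ} (ha : ∀ j, a j ≠ 0) :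
    Pdagger s C a = ∏ p ∈ Pfin s C a, p ^ lexp s a p := by
  rw [Pdagger, ← coe_Pfin s C a ha, finprod_mem_coe_finset]

lemma prod_pow_factorization_dvd (P : Finset ℕ) (hP : ∀ p ∈ P, p.Prime) (n : ℕ) (hn : n ≠ 0) :
    ∏ p ∈ P, p ^ n.factorization p ∣ n := by
  classical
  have hb0 : ∏ p ∈ P, p ^ n.factorization p ≠ 0 := by
    rw [Finset.prod_ne_zero_iff]
    exact fun p hp => pow_ne_zero _ (hP p hp).pos.ne'
  rw [← Nat.factorization_le_iff_dvd hb0 hn,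
    Nat.factorization_prod (fun p hp => pow_ne_zero _ (hP p hp).pos.ne'), Finsupp.le_def]
  intro q
  rw [Finset.sum_apply']
  rw [Finset.sum_congr rfl (fun p hp => by
    rw [(hP p hp).factorization_pow, Finsupp.single_apply])]
  rw [Finset.sum_ite_eq' P q (fun p => n.factorization p)]
  split <;> simp

open Finset in
lemma radical_count (δ : ℝ) (hδ : 0 < δ) (ε : ℝ) (hε : 0 < ε) :
    ∃ c : ℝ, 1 ≤ c ∧ ∀ A : ℝ, 1 ≤ A → ∀ Q : ℕ, 1 ≤ Q → (Q : ℝ) ≤ A ^ δ →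
      ((((Finset.Icc 1 ⌊A⌋₊).filter (fun n => n.primeFactors ⊆ Q.primeFactors)).card : ℝ))
        ≤ c * A ^ ε := by
  classical
  set η : ℝ := ε / 3 with hηdef
  have hη0 : 0 < η := by positivity
  -- choose the cutoff T
  obtain ⟨T, hT2, hTa, hTb⟩ : ∃ T : ℕ, 2 ≤ T ∧ 2 ≤ (T : ℝ) ^ η ∧ 4 * δ / η ≤ (T : ℝ) ^ η := by
    set x : ℝ := max 2 (4 * δ / η) with hxdef
    have hx0 : 0 < x := lt_of_lt_of_le two_pos (le_max_left _ _)
    refine ⟨max 2 ⌈x ^ (η⁻¹)⌉₊, le_max_left _ _, ?_, ?_⟩ <;>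
    · have h1 : x ^ (η⁻¹) ≤ ((max 2 ⌈x ^ (η⁻¹)⌉₊ : ℕ) : ℝ) := by
        refine le_trans (Nat.le_ceil _) ?_
        exact_mod_cast Nat.cast_le.mpr (le_max_right _ _)
      have h2 : (x ^ (η⁻¹)) ^ η ≤ ((max 2 ⌈x ^ (η⁻¹)⌉₊ : ℕ) : ℝ) ^ η :=
        Real.rpow_le_rpow (Real.rpow_nonneg hx0.le _) h1 hη0.le
      rw [Real.rpow_inv_rpow hx0.le hη0.ne'] at h2
      first
      | exact le_trans (le_max_left _ _) h2
      | exact le_trans (le_max_right _ _) h2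
  have hT0 : (0:ℝ) < T := by exact_mod_cast Nat.lt_of_lt_of_le two_pos hT2
  set σ : ℝ := η / (T + 1) with hσdef
  have hσ0 : 0 < σ := by positivity
  set c₁ : ℝ := (2 / σ + 1) ^ (T + 1) with hc₁def
  have hc₁0 : 0 < c₁ := by positivity
  refine ⟨max c₁ 1, le_max_right _ _, ?_⟩
  intro A hA Q hQ1 hQA
  have hA0 : (0:ℝ) < A := lt_of_lt_of_le one_pos hA
  set M : ℕ := ⌊A⌋₊ with hMdef
  have hM1 : 1 ≤ M := Nat.le_floor (by exact_mod_cast hA)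
  have hMA : (M : ℝ) ≤ A := Nat.floor_le hA0.le
  set L : ℕ := Nat.log 2 M with hLdef
  set F : Finset ℕ := (Finset.Icc 1 M).filter (fun n => n.primeFactors ⊆ Q.primeFactors)
    with hFdef
  set PF : Finset ℕ := Q.primeFactors with hPFdef
  have hQ0 : Q ≠ 0 := by omega
  set r : ℕ → ℝ := fun p => (p : ℝ) ^ (-η) with hrdef
  set S : ℕ → ℝ := fun p => ∑ i ∈ Finset.range (L + 1), (r p) ^ i with hSdef
  have hr_nonneg : ∀ p, 0 ≤ r p := fun p => Real.rpow_nonneg (Nat.cast_nonneg p) _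
  have hS_nonneg : ∀ p, 0 ≤ S p := fun p =>
    Finset.sum_nonneg fun i _ => pow_nonneg (hr_nonneg p) i
  -- basic facts about members of F
  have hFmem : ∀ b ∈ F, 1 ≤ b ∧ b ≤ M ∧ b.primeFactors ⊆ PF := by
    intro b hb
    rw [hFdef, Finset.mem_filter, Finset.mem_Icc] at hb
    exact ⟨hb.1.1, hb.1.2, hb.2⟩
  -- step 1 : card ≤ A^η * ∑ b^{-η}
  have key1 : (F.card : ℝ) ≤ A ^ η * ∑ b ∈ F, (b : ℝ) ^ (-η) := by
    rw [Finset.mul_sum, Finset.card_eq_sum_ones, Nat.cast_sum]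
    refine Finset.sum_le_sum fun b hb => ?_
    obtain ⟨hb1, hbM, -⟩ := hFmem b hb
    have hb0 : (0:ℝ) < b := by exact_mod_cast hb1
    have hbA : (b : ℝ) ≤ A := le_trans (by exact_mod_cast hbM) hMA
    have h1 : (b:ℝ) ^ η ≤ A ^ η := Real.rpow_le_rpow hb0.le hbA hη0.le
    have h2 : (0:ℝ) < (b:ℝ) ^ η := Real.rpow_pos_of_pos hb0 _
    rw [Real.rpow_neg hb0.le]
    rw [Nat.cast_one, ← div_eq_mul_inv, le_div_iff₀ h2, one_mul]
    exact h1
  -- representation of b^{-η} as a product over PF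
  have repr : ∀ b ∈ F, (b : ℝ) ^ (-η) = ∏ p ∈ PF, (r p) ^ (b.factorization p) := by
    intro b hb
    obtain ⟨hb1, hbM, hsub⟩ := hFmem b hb
    have hb0 : b ≠ 0 := by omega
    have hbeq : (b : ℕ) = ∏ p ∈ PF, p ^ (b.factorization p) := by
      rw [← Finset.prod_subset hsub (fun p _ hnp => by
        have h0 : b.factorization p = 0 :=
          Finsupp.notMem_support_iff.mp (by rwa [Nat.support_factorization])
        rw [h0, pow_zero])]
      conv_lhs => rw [← Nat.factorization_prod_pow_eq_self hb0]
      rfl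
    calc (b : ℝ) ^ (-η)
        = ((∏ p ∈ PF, p ^ (b.factorization p) : ℕ) : ℝ) ^ (-η) := by rw [← hbeq]
      _ = (∏ p ∈ PF, ((p:ℝ)) ^ (b.factorization p)) ^ (-η) := by push_cast; rfl
      _ = ∏ p ∈ PF, ((p:ℝ) ^ (b.factorization p)) ^ (-η) := by
          rw [Real.finset_prod_rpow _ _ (fun p _ => by positivity)]
      _ = ∏ p ∈ PF, (r p) ^ (b.factorization p) := by
          refine Finset.prod_congr rfl fun p hp => ?_
          have hp0 : (0:ℝ) ≤ p := Nat.cast_nonneg p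
          simp only [hrdef]
          rw [← Real.rpow_natCast (p:ℝ) (b.factorization p), ← Real.rpow_mul hp0,
            ← Real.rpow_natCast ((p:ℝ) ^ (-η)) (b.factorization p), ← Real.rpow_mul hp0,
            mul_comm]
  -- step 2 : ∑ b^{-η} ≤ ∏ S p
  have key2 : ∑ b ∈ F, (b : ℝ) ^ (-η) ≤ ∏ p ∈ PF, S p := by
    set ι : ℕ → (↥PF → ℕ) := fun b p => b.factorization ↑p with hιdef
    set h : (↥PF → ℕ) → ℝ := fun g => ∏ p : ↥PF, (r ↑p) ^ (g p) with hhdef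
    have hinj : ∀ x ∈ F, ∀ y ∈ F, ι x = ι y → x = y := by
      intro x hx y hy hxy
      obtain ⟨hx1, -, hxQ⟩ := hFmem x hx
      obtain ⟨hy1, -, hyQ⟩ := hFmem y hy
      have hx0 : x ≠ 0 := by omega
      have hy0 : y ≠ 0 := by omega
      refine Nat.factorization_inj hx0 hy0 ?_
      ext p
      by_cases hpPF : p ∈ PF
      · exact congrFun hxy ⟨p, hpPF⟩
      · by_cases hp : p.Prime
        · have h1 : ¬ p ∣ x := fun hd => hpPF (hxQ (Nat.mem_primeFactors.mpr ⟨hp, hd, hx0⟩))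
          have h2 : ¬ p ∣ y := fun hd => hpPF (hyQ (Nat.mem_primeFactors.mpr ⟨hp, hd, hy0⟩))
          rw [Nat.factorization_eq_zero_of_not_dvd h1, Nat.factorization_eq_zero_of_not_dvd h2]
        · rw [Nat.factorization_eq_zero_of_not_prime _ hp,
            Nat.factorization_eq_zero_of_not_prime _ hp]
    have himg : F.image ι ⊆ Fintype.piFinset (fun _ : ↥PF => Finset.range (L + 1)) := by
      intro g hg
      rw [Finset.mem_image] at hg
      obtain ⟨b, hb, rfl⟩ := hg
      obtain ⟨hb1, hbM, -⟩ := hFmem b hb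
      rw [Fintype.mem_piFinset]
      intro p
      rw [Finset.mem_range, Nat.lt_succ_iff]
      have hdvd : (p : ℕ) ^ (b.factorization ↑p) ∣ b := Nat.ordProj_dvd b p
      have hple : (p:ℕ) ^ (b.factorization ↑p) ≤ b := Nat.le_of_dvd (by omega) hdvd
      have hp2 : 2 ≤ (p : ℕ) := (Nat.prime_of_mem_primeFactors p.2).two_le
      have h2e : 2 ^ (b.factorization ↑p) ≤ b :=
        le_trans (Nat.pow_le_pow_left hp2 _) hple
      exact Nat.le_log_of_pow_le one_lt_two (le_trans h2e hbM)
    calc ∑ b ∈ F, (b : ℝ) ^ (-η) = ∑ b ∈ F, h (ι b) := by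
          refine Finset.sum_congr rfl fun b hb => ?_
          rw [repr b hb, hhdef, ← Finset.prod_coe_sort PF (fun p => (r p) ^ (b.factorization p))]
      _ = ∑ g ∈ F.image ι, h g := (Finset.sum_image hinj).symm
      _ ≤ ∑ g ∈ Fintype.piFinset (fun _ : ↥PF => Finset.range (L + 1)), h g := by
          refine Finset.sum_le_sum_of_subset_of_nonneg himg fun g _ _ => ?_
          exact Finset.prod_nonneg fun p _ => pow_nonneg (hr_nonneg _) _
      _ = ∏ p : ↥PF, ∑ i ∈ Finset.range (L + 1), (r ↑p) ^ i :=
          (Finset.prod_univ_sum _ _).symm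
      _ = ∏ p ∈ PF, S p := Finset.prod_coe_sort PF S
  -- split into small and large primes
  set SP : Finset ℕ := PF.filter (fun p => p ≤ T) with hSPdef
  set LP : Finset ℕ := PF.filter (fun p => ¬ p ≤ T) with hLPdef
  have hsplit : ∏ p ∈ PF, S p = (∏ p ∈ SP, S p) * (∏ p ∈ LP, S p) :=
    (Finset.prod_filter_mul_prod_filter_not PF _ S).symm
  have hL1 : (1:ℝ) ≤ (L:ℝ) + 1 := by
    have := Nat.cast_nonneg (α := ℝ) L; linarith
  -- small primes
  have hsmall : ∏ p ∈ SP, S p ≤ ((L:ℝ) + 1) ^ (T + 1) := by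
    have h1 : ∏ p ∈ SP, S p ≤ ((L:ℝ)+1) ^ SP.card := by
      rw [← Finset.prod_const]
      refine Finset.prod_le_prod (fun p _ => hS_nonneg p) fun p hp => ?_
      have hp2 : 2 ≤ (p:ℕ) :=
        (Nat.prime_of_mem_primeFactors (Finset.mem_filter.mp hp).1).two_le
      have hp1 : (1:ℝ) ≤ (p:ℝ) := by exact_mod_cast le_trans one_le_two hp2
      have hr1 : r p ≤ 1 := Real.rpow_le_one_of_one_le_of_nonpos hp1 (by linarith)
      calc S p ≤ (Finset.range (L+1)).card • (1:ℝ) :=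
            Finset.sum_le_card_nsmul _ _ _ fun i _ => pow_le_one₀ (hr_nonneg p) hr1
        _ = (L:ℝ) + 1 := by simp
    refine le_trans h1 (pow_le_pow_right₀ hL1 ?_)
    have hsub : SP ⊆ Finset.range (T+1) := fun p hp => Finset.mem_range.mpr
      (Nat.lt_succ_of_le (Finset.mem_filter.mp hp).2)
    calc SP.card ≤ (Finset.range (T+1)).card := Finset.card_le_card hsub
      _ = T + 1 := Finset.card_range _
  -- large primes
  set u : ℝ := 2 * (T:ℝ)^(-η) with hudef
  have hTη : (0:ℝ) < (T:ℝ)^η := Real.rpow_pos_of_pos hT0 _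
  have hrT : (T:ℝ)^(-η) ≤ 1/2 := by
    rw [Real.rpow_neg hT0.le]
    calc ((T:ℝ)^η)⁻¹ ≤ (2:ℝ)⁻¹ := inv_anti₀ two_pos hTa
      _ = 1/2 := by norm_num
  have hu0 : (0:ℝ) ≤ u := by positivity
  have hlarge1 : ∀ p ∈ LP, S p ≤ Real.exp u := by
    intro p hp
    have hpPF := (Finset.mem_filter.mp hp).1
    have hpT : T < p := not_le.mp (Finset.mem_filter.mp hp).2
    have hp0 : (0:ℝ) < p := by
      exact_mod_cast Nat.lt_of_lt_of_le two_pos (Nat.prime_of_mem_primeFactors hpPF).two_le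
    have hTp : (T:ℝ) ≤ (p:ℝ) := by exact_mod_cast le_of_lt hpT
    have hrp : r p ≤ (T:ℝ)^(-η) := by
      simp only [hrdef]
      rw [Real.rpow_neg hp0.le, Real.rpow_neg hT0.le]
      exact inv_anti₀ hTη (Real.rpow_le_rpow hT0.le hTp hη0.le)
    have hrp2 : r p ≤ 1/2 := le_trans hrp hrT
    have hrp1 : r p < 1 := lt_of_le_of_lt hrp2 (by norm_num)
    have hgeo : S p ≤ (1 - r p)⁻¹ := by
      refine le_trans (Summable.sum_le_tsum (Finset.range (L+1))
        (fun i _ => pow_nonneg (hr_nonneg p) i)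
        (summable_geometric_of_lt_one (hr_nonneg p) hrp1)) ?_
      exact le_of_eq (tsum_geometric_of_lt_one (hr_nonneg p) hrp1)
    have h1r : (0:ℝ) < 1 - r p := by linarith
    have hinv : (1 - r p)⁻¹ ≤ 1 + 2 * r p := by
      rw [← one_div, div_le_iff₀ h1r]
      nlinarith [hr_nonneg p]
    have h2 : 1 + 2 * r p ≤ 1 + u := by
      rw [hudef]; linarith [hrp]
    have h3 : 1 + u ≤ Real.exp u := by
      have := Real.add_one_le_exp u; linarith
    linarith
  have hlarge : ∏ p ∈ LP, S p ≤ Real.exp u ^ LP.card := by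
    rw [← Finset.prod_const]
    exact Finset.prod_le_prod (fun p _ => hS_nonneg p) hlarge1
  set k : ℕ := LP.card with hkdef
  have hTk : ((T:ℕ)^k : ℝ) ≤ (Q:ℝ) := by
    have h1 : (T:ℕ)^k ≤ ∏ p ∈ LP, p :=
      Finset.pow_card_le_prod _ _ _ fun p hp => le_of_lt (not_le.mp (Finset.mem_filter.mp hp).2)
    have h2 : ∏ p ∈ LP, p ∣ Q :=
      Finset.prod_primes_dvd Q
        (fun p hp => (Nat.prime_of_mem_primeFactors (Finset.mem_filter.mp hp).1).prime)
        (fun p hp => Nat.dvd_of_mem_primeFactors (Finset.mem_filter.mp hp).1)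
    have h3 : ∏ p ∈ LP, p ≤ Q := Nat.le_of_dvd (by omega) h2
    exact_mod_cast le_trans h1 h3
  have hklog : (k:ℝ) * Real.log T ≤ δ * Real.log A := by
    have h1 : Real.log ((T:ℝ)^k) ≤ Real.log ((Q:ℝ)) := by
      apply Real.log_le_log (pow_pos hT0 k)
      exact_mod_cast hTk
    have h2 : Real.log ((Q:ℝ)) ≤ Real.log (A ^ δ) :=
      Real.log_le_log (by exact_mod_cast hQ1) hQA
    rw [Real.log_pow] at h1
    rw [Real.log_rpow hA0] at h2
    exact le_trans h1 h2
  have hlog2 : (1:ℝ)/2 ≤ Real.log T := by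
    have h1 : Real.log 2 ≤ Real.log T := Real.log_le_log two_pos (by exact_mod_cast hT2)
    have := Real.log_two_gt_d9
    linarith
  have hulog : u ≤ (η/δ) * Real.log T := by
    have h1 : ((T:ℝ)^η)⁻¹ ≤ (4*δ/η)⁻¹ := inv_anti₀ (by positivity) hTb
    have h2 : (4*δ/η)⁻¹ = η/(4*δ) := by field_simp
    have h3 : u ≤ η/(2*δ) := by
      rw [hudef, Real.rpow_neg hT0.le]
      rw [h2] at h1
      calc 2 * ((T:ℝ)^η)⁻¹ ≤ 2 * (η/(4*δ)) := by linarith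
        _ = η/(2*δ) := by ring
    calc u ≤ η/(2*δ) := h3
      _ = (η/δ) * (1/2) := by ring
      _ ≤ (η/δ) * Real.log T := by
          refine mul_le_mul_of_nonneg_left hlog2 (by positivity)
  have hku : (k:ℝ) * u ≤ η * Real.log A := by
    calc (k:ℝ) * u ≤ (k:ℝ) * ((η/δ) * Real.log T) :=
          mul_le_mul_of_nonneg_left hulog (Nat.cast_nonneg k)
      _ = (η/δ) * ((k:ℝ) * Real.log T) := by ring
      _ ≤ (η/δ) * (δ * Real.log A) :=
          mul_le_mul_of_nonneg_left hklog (by positivity)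
      _ = η * Real.log A := by field_simp
  have hlarge2 : ∏ p ∈ LP, S p ≤ A ^ η := by
    calc ∏ p ∈ LP, S p ≤ Real.exp u ^ k := hlarge
      _ = Real.exp ((k:ℝ) * u) := (Real.exp_nat_mul u k).symm
      _ ≤ Real.exp (η * Real.log A) := Real.exp_le_exp.mpr hku
      _ = A ^ η := by rw [Real.rpow_def_of_pos hA0, mul_comm]
  -- small prime polynomial bound
  have hLlog : (L:ℝ) ≤ 2 * Real.log A := by
    have h1 : ((2:ℝ))^L ≤ A := by
      have h0 : (2:ℕ)^L ≤ M := Nat.pow_log_le_self 2 (by omega)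
      calc ((2:ℝ))^L = (((2:ℕ)^L : ℕ) : ℝ) := by push_cast; ring
        _ ≤ (M:ℝ) := by exact_mod_cast h0
        _ ≤ A := hMA
    have h2 : (L:ℝ) * Real.log 2 ≤ Real.log A := by
      rw [← Real.log_pow]; exact Real.log_le_log (by positivity) h1
    have h3 := Real.log_two_gt_d9
    nlinarith [Nat.cast_nonneg (α := ℝ) L]
  have hLA : (L:ℝ) + 1 ≤ (2/σ + 1) * A ^ σ := by
    have h3 : Real.log A ≤ A ^ σ / σ := Real.log_le_rpow_div hA0.le hσ0
    have h4 : (1:ℝ) ≤ A ^ σ := Real.one_le_rpow hA hσ0.le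
    have h5 : 2 * Real.log A ≤ 2 * (A^σ/σ) := by linarith
    calc (L:ℝ)+1 ≤ 2 * Real.log A + 1 := by linarith
      _ ≤ 2 * (A^σ/σ) + 1 := by linarith
      _ ≤ (2/σ) * A^σ + 1 * A^σ := by
          have : 2 * (A^σ/σ) = (2/σ) * A^σ := by ring
          linarith
      _ = (2/σ+1) * A^σ := by ring
  have hsmall2 : ((L:ℝ)+1)^(T+1) ≤ c₁ * A ^ η := by
    calc ((L:ℝ)+1)^(T+1) ≤ ((2/σ+1) * A^σ)^(T+1) := pow_le_pow_left₀ (by positivity) hLA _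
      _ = c₁ * (A^σ)^(T+1) := by rw [mul_pow]
      _ = c₁ * A^(σ * (T+1 : ℕ)) := by
          rw [← Real.rpow_natCast (A^σ) (T+1), ← Real.rpow_mul hA0.le]
      _ = c₁ * A^η := by
          congr 1
          rw [hσdef]
          push_cast
          field_simp
  -- final assembly
  have hAη : (0:ℝ) ≤ A ^ η := (Real.rpow_pos_of_pos hA0 η).le
  calc (F.card : ℝ) ≤ A ^ η * ∑ b ∈ F, (b : ℝ) ^ (-η) := key1
    _ ≤ A ^ η * ∏ p ∈ PF, S p := mul_le_mul_of_nonneg_left key2 hAη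
    _ = A ^ η * ((∏ p ∈ SP, S p) * (∏ p ∈ LP, S p)) := by rw [hsplit]
    _ ≤ A ^ η * ((c₁ * A ^ η) * (A ^ η)) := by
        refine mul_le_mul_of_nonneg_left ?_ hAη
        refine mul_le_mul (le_trans hsmall hsmall2) hlarge2
          (Finset.prod_nonneg fun p _ => hS_nonneg p)
          (by positivity)
    _ = c₁ * (A ^ η * A ^ η * A ^ η) := by ring
    _ = c₁ * A ^ (η + η + η) := by rw [Real.rpow_add hA0, Real.rpow_add hA0]
    _ = c₁ * A ^ ε := by
        congr 1
        congr 1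
        rw [hηdef]; ring
    _ ≤ max c₁ 1 * A ^ ε := by
        refine mul_le_mul_of_nonneg_right (le_max_left _ _) ?_
        exact (Real.rpow_pos_of_pos hA0 ε).le


/-- The vectors `a` with `0 < |a_j| ≤ A`, `P(a) ≤ A^δ` and `P†(a) > A^(2δ)` number
`≪ A^(s-δ+ε)`. -/
theorem large_Pdagger_rare (s : ℕ) (hs : 2 ≤ s) (C : ℝ) (hC : 1 ≤ C)
    (δ : ℝ) (hδ : 0 < δ) (ε : ℝ) (hε : 0 < ε) :
    ∃ K : ℝ, 0 < K ∧ ∀ A : ℝ, 1 ≤ A →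
      (Set.ncard {a : Fin s → ℤ | (∀ j, a j ≠ 0 ∧ (|a j| : ℝ) ≤ A) ∧
          (Pprod s C a : ℝ) ≤ A ^ δ ∧ A ^ (2 * δ) < (Pdagger s C a : ℝ)} : ℝ)
        ≤ K * A ^ ((s : ℝ) - δ + ε) := by
  classical
  have hs0 : (0:ℝ) < s := by positivity
  obtain ⟨c, hc1, hc⟩ := radical_count δ hδ (ε/(2*s)) (by positivity)
  have hc0 : (0:ℝ) < c := lt_of_lt_of_le one_pos hc1
  refine ⟨3^s * c^s, by positivity, ?_⟩
  intro A hA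
  have hA0 : (0:ℝ) < A := lt_of_lt_of_le one_pos hA
  set M : ℕ := ⌊A⌋₊ with hMdef
  set QM : ℕ := ⌊A ^ δ⌋₊ with hQMdef
  have hMA : (M:ℝ) ≤ A := Nat.floor_le hA0.le
  set Fq : ℕ → Finset ℕ := fun Q =>
    (Finset.Icc 1 M).filter (fun n => n.primeFactors ⊆ Q.primeFactors) with hFqdef
  set G : ℕ → Finset (Fin s → ℕ) := fun Q =>
    (Fintype.piFinset fun _ : Fin s => Fq Q).filter
      (fun b => A ^ (2*δ) < ∏ j, ((b j : ℝ))) with hGdef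
  set coord : ℕ → Finset ℤ := fun m =>
    (Finset.Icc (-((M:ℤ)/(m:ℤ))) ((M:ℤ)/(m:ℤ))).image (fun t => t * (m:ℤ)) with hcoorddef
  set Tf : (Fin s → ℕ) → Finset (Fin s → ℤ) := fun b =>
    Fintype.piFinset fun j => coord (b j) with hTfdef
  set big : Finset (Fin s → ℤ) :=
    (Finset.Icc 1 QM).biUnion (fun Q => (G Q).biUnion Tf) with hbigdef
  -- The covering step
  have hcover : {a : Fin s → ℤ | (∀ j, a j ≠ 0 ∧ (|a j| : ℝ) ≤ A) ∧
      (Pprod s C a : ℝ) ≤ A ^ δ ∧ A ^ (2 * δ) < (Pdagger s C a : ℝ)} ⊆ ↑big := by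
    rintro a ⟨haj, hPa, hPd⟩
    have ha : ∀ j, a j ≠ 0 := fun j => (haj j).1
    have hnab : ∀ j, (a j).natAbs ≠ 0 := fun j => Int.natAbs_ne_zero.mpr (ha j)
    set P : Finset ℕ := Pfin s C a with hPdef
    set Q : ℕ := Pprod s C a with hQdef
    have hQeq : Q = ∏ p ∈ P, p := Pprod_eq ha
    have hQpos : 0 < Q := by
      rw [hQeq]
      exact Finset.prod_pos fun p hp => (Pfin_prime hp).pos
    have hQM : Q ≤ QM := Nat.le_floor (by exact_mod_cast hPa)
    set b : Fin s → ℕ := fun j => ∏ p ∈ P, p ^ ((a j).natAbs.factorization p) with hbdef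
    have hbdvd : ∀ j, b j ∣ (a j).natAbs := fun j =>
      prod_pow_factorization_dvd P (fun p hp => Pfin_prime hp) _ (hnab j)
    have hbpos : ∀ j, 0 < b j := fun j =>
      Finset.prod_pos fun p hp => pow_pos (Pfin_prime hp).pos _
    have hnM : ∀ j, (a j).natAbs ≤ M := by
      intro j
      have h1 := (haj j).2
      refine Nat.le_floor ?_
      rw [Nat.cast_natAbs, Int.cast_abs]
      exact h1
    have hbM : ∀ j, b j ≤ M := fun j =>
      le_trans (Nat.le_of_dvd (Nat.pos_of_ne_zero (hnab j)) (hbdvd j)) (hnM j)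
    have hbF : ∀ j, b j ∈ Fq Q := by
      intro j
      rw [hFqdef]
      simp only [Finset.mem_filter, Finset.mem_Icc]
      refine ⟨⟨hbpos j, hbM j⟩, ?_⟩
      intro p hp
      have hpp := Nat.prime_of_mem_primeFactors hp
      have hpd : p ∣ b j := Nat.dvd_of_mem_primeFactors hp
      obtain ⟨q, hqP, hpq⟩ := (Nat.Prime.prime hpp).exists_mem_finset_dvd hpd
      have hq : q.Prime := Pfin_prime hqP
      have hpq2 : p ∣ q := hpp.dvd_of_dvd_pow hpq
      have hpq3 : p = q := (Nat.prime_dvd_prime_iff_eq hpp hq).mp hpq2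
      subst hpq3
      refine Nat.mem_primeFactors.mpr ⟨hpp, ?_, hQpos.ne'⟩
      rw [hQeq]
      exact Finset.dvd_prod_of_mem _ hqP
    have hbig : A ^ (2*δ) < ∏ j, ((b j : ℝ)) := by
      have h1 : Pdagger s C a ∣ ∏ j, b j := by
        rw [Pdagger_eq ha, hbdef]
        have h2 : ∏ j, ∏ p ∈ P, p ^ ((a j).natAbs.factorization p)
            = ∏ p ∈ P, p ^ (∑ j, (a j).natAbs.factorization p) := by
          rw [Finset.prod_comm]
          exact Finset.prod_congr rfl fun p _ => Finset.prod_pow_eq_pow_sum _ _ _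
        rw [h2]
        refine Finset.prod_dvd_prod_of_dvd _ _ fun p _ => pow_dvd_pow _ ?_
        refine Finset.sup_le fun j _ => ?_
        exact Finset.single_le_sum (f := fun j => (a j).natAbs.factorization p)
          (fun j _ => Nat.zero_le _) (Finset.mem_univ j)
      have h3 : 0 < ∏ j, b j := Finset.prod_pos fun j _ => hbpos j
      have h4 : (Pdagger s C a : ℝ) ≤ ((∏ j, b j : ℕ) : ℝ) := by
        exact_mod_cast Nat.le_of_dvd h3 h1
      push_cast at h4
      exact lt_of_lt_of_le hPd h4
    have hbG : b ∈ G Q := by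
      rw [hGdef]
      simp only [Finset.mem_filter, Fintype.mem_piFinset]
      exact ⟨fun j => hbF j, hbig⟩
    have haT : a ∈ Tf b := by
      rw [hTfdef]
      rw [Fintype.mem_piFinset]
      intro j
      rw [hcoorddef]
      simp only [Finset.mem_image, Finset.mem_Icc]
      have hbZpos : (0:ℤ) < (b j : ℤ) := by exact_mod_cast hbpos j
      have hdvdZ : ((b j : ℕ) : ℤ) ∣ a j := Int.natCast_dvd.mpr (hbdvd j)
      have habs : |a j| ≤ (M:ℤ) := by
        rw [Int.abs_eq_natAbs]; exact_mod_cast hnM j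
      refine ⟨a j / (b j : ℤ), ?_, Int.ediv_mul_cancel hdvdZ⟩
      rw [← abs_le]
      rw [Int.le_ediv_iff_mul_le hbZpos]
      calc |a j / (b j:ℤ)| * (b j : ℤ) = |a j / (b j:ℤ)| * |(b j : ℤ)| := by
            rw [abs_of_pos hbZpos]
        _ = |a j / (b j:ℤ) * (b j:ℤ)| := (abs_mul _ _).symm
        _ = |a j| := by rw [Int.ediv_mul_cancel hdvdZ]
        _ ≤ (M:ℤ) := habs
    rw [hbigdef]
    simp only [Finset.coe_biUnion, Set.mem_iUnion, Finset.mem_coe]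
    refine ⟨Q, Finset.mem_Icc.mpr ⟨hQpos, hQM⟩, b, hbG, haT⟩
  -- Counting
  have hcard : (Set.ncard {a : Fin s → ℤ | (∀ j, a j ≠ 0 ∧ (|a j| : ℝ) ≤ A) ∧
      (Pprod s C a : ℝ) ≤ A ^ δ ∧ A ^ (2 * δ) < (Pdagger s C a : ℝ)}) ≤ big.card := by
    rw [← Set.ncard_coe_finset big]
    exact Set.ncard_le_ncard hcover (big.finite_toSet)
  -- bound on Tf cards
  set Bd : ℝ := 3^s * A ^ ((s:ℝ) - 2*δ) with hBddef
  have hTcard : ∀ Q, ∀ b ∈ G Q, ((Tf b).card : ℝ) ≤ Bd := by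
    intro Q b hb
    rw [hGdef] at hb
    simp only [Finset.mem_filter, Fintype.mem_piFinset] at hb
    obtain ⟨hbF, hbig⟩ := hb
    have hbb : ∀ j, 1 ≤ b j ∧ b j ≤ M := by
      intro j
      have := hbF j
      rw [hFqdef] at this
      simp only [Finset.mem_filter, Finset.mem_Icc] at this
      exact this.1
    have hcoordcard : ∀ j, ((coord (b j)).card : ℝ) ≤ 3 * (A / (b j : ℝ)) := by
      intro j
      obtain ⟨hb1, hbM⟩ := hbb j
      have hbZ : (0:ℤ) < (b j:ℤ) := by exact_mod_cast hb1
      have hbR : (0:ℝ) < (b j:ℝ) := by exact_mod_cast hb1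
      set q : ℤ := (M:ℤ)/(b j : ℤ) with hqdef
      have hq1 : 1 ≤ q := by
        rw [hqdef, Int.le_ediv_iff_mul_le hbZ, one_mul]
        exact_mod_cast hbM
      have hqb : q * (b j:ℤ) ≤ (M:ℤ) := Int.ediv_mul_le _ hbZ.ne'
      have hqA : (q:ℝ) ≤ A / (b j:ℝ) := by
        rw [le_div_iff₀ hbR]
        have h1 : ((q * (b j:ℤ) : ℤ):ℝ) ≤ ((M:ℤ):ℝ) := by exact_mod_cast hqb
        push_cast at h1
        calc (q:ℝ) * (b j:ℝ) ≤ (M:ℝ) := h1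
          _ ≤ A := hMA
      have hcc : (coord (b j)).card ≤ (2*q+1).toNat := by
        rw [hcoorddef]
        refine le_trans (Finset.card_image_le) ?_
        rw [Int.card_Icc]
        have : q + 1 - -q = 2*q+1 := by ring
        rw [this]
      have hccR : ((coord (b j)).card : ℝ) ≤ 2*(q:ℝ)+1 := by
        have h0 : (0:ℤ) ≤ 2*q+1 := by linarith
        have h2 := congrArg (fun z : ℤ => (z:ℝ)) (Int.toNat_of_nonneg h0)
        push_cast at h2
        have h3 : ((coord (b j)).card : ℝ) ≤ (((2*q+1).toNat : ℕ):ℝ) := by exact_mod_cast hcc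
        rw [h2] at h3
        linarith
      have hqR1 : (1:ℝ) ≤ (q:ℝ) := by exact_mod_cast hq1
      calc ((coord (b j)).card : ℝ) ≤ 2*(q:ℝ)+1 := hccR
        _ ≤ 3*(q:ℝ) := by linarith
        _ ≤ 3 * (A / (b j:ℝ)) := by linarith
    have hTcard1 : ((Tf b).card : ℝ) = ∏ j, ((coord (b j)).card : ℝ) := by
      rw [hTfdef, Fintype.card_piFinset]; push_cast; rfl
    have hprodpos : (0:ℝ) < ∏ j, ((b j : ℝ)) :=
      Finset.prod_pos fun j _ => by exact_mod_cast (hbb j).1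
    calc ((Tf b).card : ℝ) = ∏ j, ((coord (b j)).card : ℝ) := hTcard1
      _ ≤ ∏ j, (3 * (A / (b j : ℝ))) :=
          Finset.prod_le_prod (fun j _ => by positivity) (fun j _ => hcoordcard j)
      _ = 3^s * (A^s / ∏ j, ((b j : ℝ))) := by
          rw [Finset.prod_mul_distrib, Finset.prod_const, Finset.prod_div_distrib,
            Finset.prod_const, Finset.card_univ, Fintype.card_fin]
      _ ≤ 3^s * (A^s / A ^ (2*δ)) := by
          refine mul_le_mul_of_nonneg_left ?_ (by positivity)
          exact div_le_div_of_nonneg_left (by positivity) (Real.rpow_pos_of_pos hA0 _)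
            hbig.le
      _ = Bd := by
          rw [hBddef, ← Real.rpow_natCast A s, ← Real.rpow_sub hA0]
    -- end
  have hBd0 : 0 ≤ Bd := by
    rw [hBddef]; positivity
  -- bound on G cards
  have hGcard : ∀ Q ∈ Finset.Icc 1 QM, ((G Q).card : ℝ) ≤ c^s * A ^ (ε/2) := by
    intro Q hQ
    rw [Finset.mem_Icc] at hQ
    have hQA : (Q:ℝ) ≤ A ^ δ := by
      calc (Q:ℝ) ≤ (QM:ℝ) := by exact_mod_cast hQ.2
        _ ≤ A ^ δ := Nat.floor_le (Real.rpow_pos_of_pos hA0 δ).le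
    have h1 : ((Fq Q).card : ℝ) ≤ c * A ^ (ε/(2*s)) := hc A hA Q hQ.1 hQA
    have h2 : (G Q).card ≤ (Fq Q).card ^ s := by
      calc (G Q).card ≤ (Fintype.piFinset fun _ : Fin s => Fq Q).card :=
            Finset.card_filter_le _ _
        _ = (Fq Q).card ^ s := by
            rw [Fintype.card_piFinset, Finset.prod_const, Finset.card_univ, Fintype.card_fin]
    calc ((G Q).card : ℝ) ≤ (((Fq Q).card : ℝ)) ^ s := by exact_mod_cast h2
      _ ≤ (c * A ^ (ε/(2*s))) ^ s := pow_le_pow_left₀ (by positivity) h1 s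
      _ = c^s * A ^ (ε/2) := by
          rw [mul_pow, ← Real.rpow_natCast (A ^ (ε/(2*s))) s, ← Real.rpow_mul hA0.le]
          congr 2
          field_simp
  -- assemble
  have hQMA : (QM : ℝ) ≤ A ^ δ := Nat.floor_le (Real.rpow_pos_of_pos hA0 δ).le
  have hbigcard : (big.card : ℝ) ≤ A ^ δ * (c^s * A ^ (ε/2) * Bd) := by
    have h1 : big.card ≤ ∑ Q ∈ Finset.Icc 1 QM, ((G Q).biUnion Tf).card :=
      Finset.card_biUnion_le
    have h2 : ∀ Q ∈ Finset.Icc 1 QM, ((G Q).biUnion Tf).card ≤ ∑ b ∈ G Q, (Tf b).card :=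
      fun Q _ => Finset.card_biUnion_le
    have h3 : (big.card : ℝ) ≤ ∑ Q ∈ Finset.Icc 1 QM, ∑ b ∈ G Q, ((Tf b).card : ℝ) := by
      calc (big.card : ℝ) ≤ ((∑ Q ∈ Finset.Icc 1 QM, ((G Q).biUnion Tf).card : ℕ) : ℝ) := by
            exact_mod_cast h1
        _ ≤ ((∑ Q ∈ Finset.Icc 1 QM, ∑ b ∈ G Q, (Tf b).card : ℕ) : ℝ) := by
            exact_mod_cast Finset.sum_le_sum h2
        _ = ∑ Q ∈ Finset.Icc 1 QM, ∑ b ∈ G Q, ((Tf b).card : ℝ) := by push_cast; rfl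
    calc (big.card : ℝ) ≤ ∑ Q ∈ Finset.Icc 1 QM, ∑ b ∈ G Q, ((Tf b).card : ℝ) := h3
      _ ≤ ∑ Q ∈ Finset.Icc 1 QM, ∑ b ∈ G Q, Bd :=
          Finset.sum_le_sum fun Q _ => Finset.sum_le_sum fun b hb => hTcard Q b hb
      _ = ∑ Q ∈ Finset.Icc 1 QM, ((G Q).card : ℝ) * Bd := by
          refine Finset.sum_congr rfl fun Q _ => ?_
          rw [Finset.sum_const, nsmul_eq_mul]
      _ ≤ ∑ Q ∈ Finset.Icc 1 QM, (c^s * A ^ (ε/2)) * Bd := by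
          refine Finset.sum_le_sum fun Q hQ => ?_
          exact mul_le_mul_of_nonneg_right (hGcard Q hQ) hBd0
      _ = ((Finset.Icc 1 QM).card : ℝ) * ((c^s * A ^ (ε/2)) * Bd) := by
          rw [Finset.sum_const, nsmul_eq_mul]
      _ ≤ A ^ δ * (c^s * A ^ (ε/2) * Bd) := by
          refine mul_le_mul_of_nonneg_right ?_ (by positivity)
          rw [Nat.card_Icc]
          calc ((QM + 1 - 1 : ℕ):ℝ) = (QM:ℝ) := by norm_num
            _ ≤ A ^ δ := hQMA
  calc (Set.ncard {a : Fin s → ℤ | (∀ j, a j ≠ 0 ∧ (|a j| : ℝ) ≤ A) ∧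
      (Pprod s C a : ℝ) ≤ A ^ δ ∧ A ^ (2 * δ) < (Pdagger s C a : ℝ)} : ℝ)
      ≤ (big.card : ℝ) := by exact_mod_cast hcard
    _ ≤ A ^ δ * (c^s * A ^ (ε/2) * Bd) := hbigcard
    _ = (3^s * c^s) * (A ^ δ * A ^ (ε/2) * A ^ ((s:ℝ) - 2*δ)) := by
        rw [hBddef]; ring
    _ = (3^s * c^s) * A ^ ((s:ℝ) - δ + ε/2) := by
        rw [← Real.rpow_add hA0, ← Real.rpow_add hA0]
        congr 1
        congr 1
        ring
    _ ≤ (3^s * c^s) * A ^ ((s:ℝ) - δ + ε) := by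
        refine mul_le_mul_of_nonneg_left ?_ (by positivity)
        exact Real.rpow_le_rpow_of_exponent_le hA (by linarith)
end
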